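/- arXiv:1509.04135 — 10 statements merged into one kernel-verified Lean document; each statement's English description precedes it below -/
import Mathlib

section
/- If ρ > μI, then j has exactly one positive root: there exists a unique r0 > 0 such that j(r0) = 0. (Indeed j(0) = μI − ρ < 0, j is continuous and strictly convex, and j(r) → +∞ as r → +∞.) -/
open Real Set Filter

lemma aux_strict_quad (A : ℝ) (hA : 0 < A) :
    StrictConvexOn ℝ Set.univ (fun r : ℝ => A * r ^ 2) := by
  refine ⟨convex_univ, ?_⟩
  intro x _ y _ hxy a b ha hb hab
  simp only [smul_eq_mul]
  have h : (0:ℝ) < (x - y) ^ 2 :=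
    lt_of_le_of_ne (sq_nonneg _) (Ne.symm (pow_ne_zero 2 (sub_ne_zero.mpr hxy)))
  have key : 0 < A * a * b * (x - y) ^ 2 :=
    mul_pos (mul_pos (mul_pos hA ha) hb) h
  have hid : a * (A * x ^ 2) + b * (A * y ^ 2) - A * (a * x + b * y) ^ 2
      = A * a * b * (x - y) ^ 2 := by
    linear_combination (-(A * (a * x ^ 2 + b * y ^ 2))) * hab
  linarith

lemma aux_convex_affine (B C : ℝ) : ConvexOn ℝ Set.univ (fun r : ℝ => B * r + C) := by
  refine ⟨convex_univ, ?_⟩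
  intro x _ y _ a b _ _ hab
  simp only [smul_eq_mul]
  have h : B * (a * x + b * y) + C = a * (B * x + C) + b * (B * y + C) := by
    linear_combination (-C) * hab
  linarith [h.le]

lemma aux_convex_exp (c k d : ℝ) (hc : 0 ≤ c) :
    ConvexOn ℝ Set.univ (fun r : ℝ => c * Real.exp (k * r + d)) := by
  have h : ConvexOn ℝ Set.univ (fun r : ℝ => Real.exp (k * r + d)) := by
    refine ⟨convex_univ, ?_⟩
    intro x _ y _ a b ha hb hab
    have h2 := convexOn_exp.2 (Set.mem_univ (k * x + d)) (Set.mem_univ (k * y + d)) ha hb hab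
    simp only [smul_eq_mul] at h2 ⊢
    have he : a * (k * x + d) + b * (k * y + d) = k * (a * x + b * y) + d := by
      linear_combination d * hab
    rwa [he] at h2
  simpa only [smul_eq_mul] using h.smul hc

/-- If `ρ > μI`, then `j` has exactly one positive root. -/
theorem j_unique_positive_root (θ ρ μX σX lamX mX μI σI lamI mI : ℝ)
    (hθ : 0 < θ) (hσX : 0 < σX) (hlamX : 0 ≤ lamX) (hmX : -1 < mX)
    (hσI : 0 < σI) (hlamI : 0 ≤ lamI) (hmI : -1 < mI)
    (hρ : μI < ρ)
    (j : ℝ → ℝ)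
    (hj : ∀ r : ℝ, j r = ((θ ^ 2 * σX ^ 2 + σI ^ 2) / 2) * r ^ 2
      + ((μX - σX ^ 2 / 2 - lamX * mX) * θ - (μI + σI ^ 2 / 2 - lamI * mI)) * r
      + ((μI - lamI * mI) - (lamX + lamI) - ρ)
      + lamX * (1 + mX) ^ (θ * r) + lamI * (1 + mI) ^ (1 - r)) :
    ∃! r0 : ℝ, 0 < r0 ∧ j r0 = 0 := by
  have hmX' : (0:ℝ) < 1 + mX := by linarith
  have hmI' : (0:ℝ) < 1 + mI := by linarith
  set A : ℝ := (θ ^ 2 * σX ^ 2 + σI ^ 2) / 2 with hA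
  set B : ℝ := (μX - σX ^ 2 / 2 - lamX * mX) * θ - (μI + σI ^ 2 / 2 - lamI * mI) with hB
  set C : ℝ := (μI - lamI * mI) - (lamX + lamI) - ρ with hC
  have hApos : 0 < A := by positivity
  -- rewrite j in exponential form
  have hj' : ∀ r : ℝ, j r = A * r ^ 2 + (B * r + C)
      + lamX * Real.exp (Real.log (1 + mX) * θ * r + 0)
      + lamI * Real.exp (-Real.log (1 + mI) * r + Real.log (1 + mI)) := by
    intro r
    rw [hj r, Real.rpow_def_of_pos hmX', Real.rpow_def_of_pos hmI']
    ring_nf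
  -- j 0 = μI - ρ < 0
  have hj0 : j 0 = μI - ρ := by
    rw [hj 0]
    simp [Real.rpow_one]
    ring
  have hj0neg : j 0 < 0 := by rw [hj0]; linarith
  -- strict convexity
  have hconv : StrictConvexOn ℝ Set.univ j := by
    have h1 := aux_strict_quad A hApos
    have h2 := aux_convex_affine B C
    have h3 := aux_convex_exp lamX (Real.log (1 + mX) * θ) 0 hlamX
    have h4 := aux_convex_exp lamI (-Real.log (1 + mI)) (Real.log (1 + mI)) hlamI
    have h := ((h1.add_convexOn h2).add_convexOn h3).add_convexOn h4
    have hfun : j = (((fun r : ℝ => A * r ^ 2) + fun r : ℝ => B * r + C)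
        + fun r : ℝ => lamX * Real.exp (Real.log (1 + mX) * θ * r + 0))
        + fun r : ℝ => lamI * Real.exp (-Real.log (1 + mI) * r + Real.log (1 + mI)) := by
      funext r
      simp only [Pi.add_apply]
      exact hj' r
    rwa [hfun]
  -- continuity
  have hcont : Continuous j := by
    have : Continuous fun r : ℝ => A * r ^ 2 + (B * r + C)
        + lamX * Real.exp (Real.log (1 + mX) * θ * r + 0)
        + lamI * Real.exp (-Real.log (1 + mI) * r + Real.log (1 + mI)) := by
      have e1 : Continuous fun r : ℝ => Real.exp (Real.log (1 + mX) * θ * r + 0) :=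
        Real.continuous_exp.comp ((continuous_const.mul continuous_id).add continuous_const)
      have e2 : Continuous fun r : ℝ => Real.exp (-Real.log (1 + mI) * r + Real.log (1 + mI)) :=
        Real.continuous_exp.comp ((continuous_const.mul continuous_id).add continuous_const)
      exact ((((continuous_const.mul (continuous_pow 2)).add
        ((continuous_const.mul continuous_id).add continuous_const)).add
        (continuous_const.mul e1)).add (continuous_const.mul e2))
    have hfun : j = fun r : ℝ => A * r ^ 2 + (B * r + C)
        + lamX * Real.exp (Real.log (1 + mX) * θ * r + 0)
        + lamI * Real.exp (-Real.log (1 + mI) * r + Real.log (1 + mI)) := funext hj'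
    rwa [hfun]
  -- tendsto atTop
  have htend : Tendsto j atTop atTop := by
    have hq : Tendsto (fun r : ℝ => A * (r + B / (2 * A)) ^ 2 + (C - B ^ 2 / (4 * A)))
        atTop atTop := by
      have h1 : Tendsto (fun r : ℝ => r + B / (2 * A)) atTop atTop :=
        tendsto_atTop_add_const_right _ _ tendsto_id
      have h2 : Tendsto (fun r : ℝ => (r + B / (2 * A)) ^ 2) atTop atTop :=
        (tendsto_pow_atTop two_ne_zero).comp h1
      exact tendsto_atTop_add_const_right _ _ (h2.const_mul_atTop hApos)
    refine tendsto_atTop_mono ?_ hq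
    intro r
    have hq_eq : A * (r + B / (2 * A)) ^ 2 + (C - B ^ 2 / (4 * A))
        = A * r ^ 2 + (B * r + C) := by
      field_simp
      ring
    rw [hq_eq, hj' r]
    have h3 : 0 ≤ lamX * Real.exp (Real.log (1 + mX) * θ * r + 0) := by positivity
    have h4 : 0 ≤ lamI * Real.exp (-Real.log (1 + mI) * r + Real.log (1 + mI)) := by positivity
    linarith
  -- existence
  obtain ⟨R, hR0, hRpos⟩ : ∃ R : ℝ, 0 ≤ j R ∧ 0 < R := by
    have := (htend.eventually_ge_atTop 0).and (eventually_gt_atTop (0:ℝ))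
    obtain ⟨R, h1, h2⟩ := this.exists
    exact ⟨R, h1, h2⟩
  have hIVT := intermediate_value_Icc hRpos.le hcont.continuousOn
  have h0mem : (0:ℝ) ∈ Set.Icc (j 0) (j R) := ⟨hj0neg.le, hR0⟩
  obtain ⟨r0, hr0mem, hr0⟩ := hIVT h0mem
  have hr0pos : 0 < r0 := by
    rcases lt_or_eq_of_le hr0mem.1 with h | h
    · exact h
    · exfalso; rw [← h] at hr0; rw [hr0] at hj0neg; exact lt_irrefl 0 hj0neg
  -- uniqueness
  refine ⟨r0, ⟨hr0pos, hr0⟩, ?_⟩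
  -- show any positive root equals r0; first a general fact: no two distinct positive roots
  have key : ∀ r1 r2 : ℝ, 0 < r1 → 0 < r2 → j r1 = 0 → j r2 = 0 → r1 < r2 → False := by
    intro r1 r2 h1 h2 hr1 hr2 hlt
    have hab : (1 - r1 / r2) + r1 / r2 = 1 := by ring
    have ha : 0 < 1 - r1 / r2 := by
      have : r1 / r2 < 1 := (div_lt_one h2).mpr hlt
      linarith
    have hb : 0 < r1 / r2 := div_pos h1 h2
    have hne : (0:ℝ) ≠ r2 := h2.ne
    have := hconv.2 (Set.mem_univ 0) (Set.mem_univ r2) hne ha hb hab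
    simp only [smul_eq_mul, mul_zero, zero_add] at this
    rw [div_mul_cancel₀ _ h2.ne'] at this
    rw [hr1, hr2, hj0] at this
    nlinarith
  intro r hr
  rcases lt_trichotomy r r0 with h | h | h
  · exact absurd (key r r0 hr.1 hr0pos hr.2 hr0 h) (fun f => f)
  · exact h
  · exact absurd (key r0 r hr0pos hr.1 hr0 hr.2 h) (fun f => f)
end

section
/- Assume ρ > μI and h > 0. Then j(1) = −h < 0, and the unique positive root r0 of j satisfies r0 > 1 and j'(r0) > 0. -/
open Real

/-- Assume `ρ > μI` and `h > 0`. Then `j(1) = -h < 0`, and the unique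
positive root `r0` of `j` satisfies `r0 > 1` and `j'(r0) > 0`. -/
theorem j_root_gt_one (θ ρ μX σX lamX mX μI σI lamI mI h : ℝ)
    (hθ : 0 < θ) (hσX : 0 < σX) (hlamX : 0 ≤ lamX) (hmX : -1 < mX)
    (hσI : 0 < σI) (hlamI : 0 ≤ lamI) (hmI : -1 < mI)
    (hρ : μI < ρ)
    (hh : h = ρ - (μX + (θ - 1) * σX ^ 2 / 2 - lamX * mX) * θ
      - lamX * ((1 + mX) ^ θ - 1))
    (hhpos : 0 < h)
    (j : ℝ → ℝ)
    (hj : ∀ r : ℝ, j r = ((θ ^ 2 * σX ^ 2 + σI ^ 2) / 2) * r ^ 2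
      + ((μX - σX ^ 2 / 2 - lamX * mX) * θ - (μI + σI ^ 2 / 2 - lamI * mI)) * r
      + ((μI - lamI * mI) - (lamX + lamI) - ρ)
      + lamX * (1 + mX) ^ (θ * r) + lamI * (1 + mI) ^ (1 - r)) :
    j 1 = -h ∧ j 1 < 0 ∧
    ∀ r0 : ℝ, 0 < r0 → j r0 = 0 → 1 < r0 ∧ 0 < deriv j r0 := by
  have hpX : (0:ℝ) < 1 + mX := by linarith
  have hpI : (0:ℝ) < 1 + mI := by linarith
  set C : ℝ := (θ ^ 2 * σX ^ 2 + σI ^ 2) / 2 with hC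
  set B : ℝ := (μX - σX ^ 2 / 2 - lamX * mX) * θ - (μI + σI ^ 2 / 2 - lamI * mI) with hB
  have hCpos : 0 < C := by positivity
  -- the derivative function
  set g : ℝ → ℝ := fun r => C * (2 * r) + B
      + lamX * ((1 + mX) ^ (θ * r) * Real.log (1 + mX) * θ)
      - lamI * ((1 + mI) ^ (1 - r) * Real.log (1 + mI)) with hg
  -- derivative of the rpow terms
  have hX : ∀ r : ℝ, HasDerivAt (fun r : ℝ => (1 + mX) ^ (θ * r))
      ((1 + mX) ^ (θ * r) * Real.log (1 + mX) * θ) r := by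
    intro r
    have h1 := (hasStrictDerivAt_const_rpow hpX (θ * r)).hasDerivAt
    have h2 : HasDerivAt (fun r : ℝ => θ * r) θ r := by
      simpa using (hasDerivAt_id r).const_mul θ
    exact (h1.comp r h2).congr_deriv (by ring)
  have hI : ∀ r : ℝ, HasDerivAt (fun r : ℝ => (1 + mI) ^ (1 - r))
      (-((1 + mI) ^ (1 - r) * Real.log (1 + mI))) r := by
    intro r
    have h1 := (hasStrictDerivAt_const_rpow hpI (1 - r)).hasDerivAt
    have h2 : HasDerivAt (fun r : ℝ => 1 - r) (-1) r := by
      simpa using (hasDerivAt_id r).const_sub 1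
    have := h1.comp r h2
    exact this.congr_deriv (by ring)
  have key : ∀ r : ℝ, HasDerivAt j (g r) r := by
    intro r
    have hje : j = fun r : ℝ => C * r ^ 2 + B * r
        + ((μI - lamI * mI) - (lamX + lamI) - ρ)
        + lamX * (1 + mX) ^ (θ * r) + lamI * (1 + mI) ^ (1 - r) := funext hj
    rw [hje]
    have hq : HasDerivAt (fun r : ℝ => C * r ^ 2) (C * (2 * r)) r := by
      simpa using (hasDerivAt_pow 2 r).const_mul C
    have hl : HasDerivAt (fun r : ℝ => B * r) B r := by
      simpa using (hasDerivAt_id r).const_mul B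
    have := ((((hq.add hl).add_const ((μI - lamI * mI) - (lamX + lamI) - ρ)).add
      ((hX r).const_mul lamX)).add ((hI r).const_mul lamI))
    refine this.congr_deriv ?_
    rw [hg]; ring
  -- second derivative of g is positive, so g is strictly monotone
  have key2 : StrictMono g := by
    apply strictMono_of_hasDerivAt_pos (f' := fun r => C * 2
      + lamX * ((1 + mX) ^ (θ * r) * Real.log (1 + mX) * θ * (Real.log (1 + mX) * θ))
      + lamI * ((1 + mI) ^ (1 - r) * Real.log (1 + mI) * Real.log (1 + mI)))
    · intro r
      have hq : HasDerivAt (fun r : ℝ => C * (2 * r)) (C * 2) r := by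
        simpa [mul_assoc] using ((hasDerivAt_id r).const_mul 2).const_mul C
      have hX' : HasDerivAt
          (fun r : ℝ => lamX * ((1 + mX) ^ (θ * r) * Real.log (1 + mX) * θ))
          (lamX * ((1 + mX) ^ (θ * r) * Real.log (1 + mX) * θ * (Real.log (1 + mX) * θ))) r := by
        have := (((hX r).mul_const (Real.log (1 + mX))).mul_const θ).const_mul lamX
        refine this.congr_deriv ?_
        ring
      have hI' : HasDerivAt
          (fun r : ℝ => lamI * ((1 + mI) ^ (1 - r) * Real.log (1 + mI)))
          (-(lamI * ((1 + mI) ^ (1 - r) * Real.log (1 + mI) * Real.log (1 + mI)))) r := by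
        have := ((hI r).mul_const (Real.log (1 + mI))).const_mul lamI
        refine this.congr_deriv ?_
        ring
      have := ((hq.add_const B).add hX').sub hI'
      refine this.congr_deriv ?_
      ring_nf
    · intro r
      have h1 : 0 ≤ lamX * ((1 + mX) ^ (θ * r) * Real.log (1 + mX) * θ * (Real.log (1 + mX) * θ)) := by
        have : (1 + mX) ^ (θ * r) * Real.log (1 + mX) * θ * (Real.log (1 + mX) * θ)
            = (1 + mX) ^ (θ * r) * (Real.log (1 + mX) * θ) ^ 2 := by ring
        rw [this]
        positivity
      have h2 : 0 ≤ lamI * ((1 + mI) ^ (1 - r) * Real.log (1 + mI) * Real.log (1 + mI)) := by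
        have : (1 + mI) ^ (1 - r) * Real.log (1 + mI) * Real.log (1 + mI)
            = (1 + mI) ^ (1 - r) * (Real.log (1 + mI)) ^ 2 := by ring
        rw [this]
        positivity
      linarith
  have hcont : Continuous j := by
    rw [continuous_iff_continuousAt]
    exact fun r => (key r).continuousAt
  -- value at 1
  have hj1 : j 1 = -h := by
    have := hj 1
    rw [show (1:ℝ) - 1 = 0 by norm_num, Real.rpow_zero, mul_one] at this
    rw [this, hh, hC, hB]
    ring
  have hj1neg : j 1 < 0 := by rw [hj1]; linarith
  -- value at 0
  have hj0 : j 0 = μI - ρ := by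
    have := hj 0
    rw [show θ * 0 = 0 by ring, Real.rpow_zero, show (1:ℝ) - 0 = 1 by norm_num,
      Real.rpow_one] at this
    rw [this]
    ring
  refine ⟨hj1, hj1neg, ?_⟩
  intro r0 hr0pos hr0root
  have hgt : 1 < r0 := by
    by_contra hle
    push_neg at hle
    rcases eq_or_lt_of_le hle with heq | hlt
    · rw [heq] at hr0root; linarith
    · -- 0 < r0 < 1
      obtain ⟨c1, hc1, hs1⟩ := exists_hasDerivAt_eq_slope j g hr0pos
        (hcont.continuousOn) (fun x _ => key x)
      obtain ⟨c2, hc2, hs2⟩ := exists_hasDerivAt_eq_slope j g hlt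
        (hcont.continuousOn) (fun x _ => key x)
      have hg1 : 0 < g c1 := by
        rw [hs1, hr0root, hj0]
        have : (0 - (μI - ρ)) / (r0 - 0) > 0 := by
          apply div_pos <;> linarith
        linarith
      have hg2 : g c2 < 0 := by
        rw [hs2, hr0root, hj1]
        have : (-h - 0) / (1 - r0) < 0 := by
          apply div_neg_of_neg_of_pos <;> linarith
        linarith
      have : g c1 < g c2 := key2 (lt_trans hc1.2 hc2.1)
      linarith
  refine ⟨hgt, ?_⟩
  obtain ⟨c, hc, hs⟩ := exists_hasDerivAt_eq_slope j g hgt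
    (hcont.continuousOn) (fun x _ => key x)
  have hgc : 0 < g c := by
    rw [hs, hr0root, hj1]
    apply div_pos <;> linarith
  have : g c < g r0 := key2 hc.2
  rw [(key r0).deriv]
  linarith
end

section
/- Let f : (0,∞) → ℝ be twice continuously differentiable and define V(x,i) = i·f(x^θ/i) for x, i > 0. Then V is twice continuously differentiable on (0,∞)×(0,∞), and for all x, i > 0, writing q = x^θ/i, one has (𝓛V)(x,i) = i·(L_Q f)(q); consequently ρ·V(x,i) − (𝓛V)(x,i) = i·(ρ·f(q) − (L_Q f)(q)). -/
open Real Set Filter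

noncomputable def Ltwo (σX σI μX μI lamX lamI mX mI : ℝ) (V : ℝ → ℝ → ℝ) (x i : ℝ) : ℝ :=
  σX ^ 2 / 2 * x ^ 2 * deriv (deriv (fun x' => V x' i)) x
    + σI ^ 2 / 2 * i ^ 2 * deriv (deriv (fun i' => V x i')) i
    + (μX - lamX * mX) * x * deriv (fun x' => V x' i) x
    + (μI - lamI * mI) * i * deriv (fun i' => V x i') i
    + lamX * (V (x * (1 + mX)) i - V x i)
    + lamI * (V x (i * (1 + mI)) - V x i)

noncomputable def LQ (θ σX σI μX μI lamX lamI mX mI : ℝ) (f : ℝ → ℝ) (q : ℝ) : ℝ :=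
  ((θ ^ 2 * σX ^ 2 + σI ^ 2) / 2) * q ^ 2 * deriv (deriv f) q
    + ((μX + (θ - 1) * σX ^ 2 / 2 - lamX * mX) * θ - (μI - lamI * mI)) * q * deriv f q
    + ((μI - lamI * mI) - (lamX + lamI)) * f q
    + lamX * f (q * (1 + mX) ^ θ) + lamI * (1 + mI) * f (q / (1 + mI))

/-- If `f` is `C²` on `(0,∞)` and `V(x,i) = i f(x^θ/i)`, then `V` is `C²`
on `(0,∞)²` and `(𝓛V)(x,i) = i (L_Q f)(x^θ/i)`, whence
`ρ V(x,i) - (𝓛V)(x,i) = i (ρ f(q) - (L_Q f)(q))` with `q = x^θ/i`. -/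
theorem generator_reduction (θ ρ μX σX lamX mX μI σI lamI mI : ℝ)
    (hθ : 0 < θ) (hσX : 0 < σX) (hlamX : 0 ≤ lamX) (hmX : -1 < mX)
    (hσI : 0 < σI) (hlamI : 0 ≤ lamI) (hmI : -1 < mI)
    (f : ℝ → ℝ) (hf : ContDiffOn ℝ 2 f (Set.Ioi 0))
    (V : ℝ → ℝ → ℝ) (hV : ∀ x i : ℝ, V x i = i * f (x ^ θ / i)) :
    ContDiffOn ℝ 2 (fun p : ℝ × ℝ => V p.1 p.2) (Set.Ioi 0 ×ˢ Set.Ioi 0)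
    ∧ ∀ x i : ℝ, 0 < x → 0 < i →
        Ltwo σX σI μX μI lamX lamI mX mI V x i
          = i * LQ θ σX σI μX μI lamX lamI mX mI f (x ^ θ / i)
        ∧ ρ * V x i - Ltwo σX σI μX μI lamX lamI mX mI V x i
          = i * (ρ * f (x ^ θ / i)
              - LQ θ σX σI μX μI lamX lamI mX mI f (x ^ θ / i)) := by
  have hfd : ∀ y ∈ Ioi (0:ℝ), HasDerivAt f (deriv f y) y := fun y hy =>
    ((hf.differentiableOn (by norm_num)).differentiableAt (isOpen_Ioi.mem_nhds hy)).hasDerivAt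
  have hg : ContDiffOn ℝ 1 (deriv f) (Ioi 0) :=
    hf.deriv_of_isOpen isOpen_Ioi (m := 1) (by norm_num)
  have hgd : ∀ y ∈ Ioi (0:ℝ), HasDerivAt (deriv f) (deriv (deriv f) y) y := fun y hy =>
    ((hg.differentiableOn (by norm_num)).differentiableAt (isOpen_Ioi.mem_nhds hy)).hasDerivAt
  -- derivative in x
  have keyX : ∀ i : ℝ, 0 < i → ∀ x : ℝ, 0 < x →
      HasDerivAt (fun x' => i * f (x' ^ θ / i)) (θ * x ^ (θ - 1) * deriv f (x ^ θ / i)) x := by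
    intro i hi x hx
    have hq : x ^ θ / i ∈ Ioi (0:ℝ) := div_pos (rpow_pos_of_pos hx θ) hi
    have h1 : HasDerivAt (fun x' : ℝ => x' ^ θ / i) (θ * x ^ (θ - 1) / i) x :=
      (Real.hasDerivAt_rpow_const (Or.inl hx.ne')).div_const i
    have h2 := ((hfd _ hq).comp x h1).const_mul i
    refine h2.congr_deriv ?_
    field_simp
  -- derivative in i
  have hinv : ∀ x : ℝ, 0 < x → ∀ i : ℝ, 0 < i →
      HasDerivAt (fun i' : ℝ => x ^ θ / i') (-(x ^ θ / i ^ 2)) i := by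
    intro x hx i hi
    have h := (hasDerivAt_inv hi.ne').const_mul (x ^ θ)
    refine h.congr_deriv ?_
    field_simp
  have keyI : ∀ x : ℝ, 0 < x → ∀ i : ℝ, 0 < i →
      HasDerivAt (fun i' => i' * f (x ^ θ / i'))
        (f (x ^ θ / i) - (x ^ θ / i) * deriv f (x ^ θ / i)) i := by
    intro x hx i hi
    have hq : x ^ θ / i ∈ Ioi (0:ℝ) := div_pos (rpow_pos_of_pos hx θ) hi
    have h2 := (hfd _ hq).comp i (hinv x hx i hi)
    have h3 := (hasDerivAt_id i).mul h2
    refine h3.congr_deriv ?_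
    simp only [Function.comp_apply, id]
    field_simp; ring
  constructor
  · -- smoothness
    rw [isOpen_Ioi.prod isOpen_Ioi |>.contDiffOn_iff]
    intro p hp
    obtain ⟨hp1, hp2⟩ : p.1 ∈ Ioi (0:ℝ) ∧ p.2 ∈ Ioi (0:ℝ) := hp
    have h1 : ContDiffAt ℝ 2 (fun p : ℝ × ℝ => p.1 ^ θ) p :=
      contDiffAt_fst.rpow_const_of_ne (ne_of_gt hp1)
    have h2 : ContDiffAt ℝ 2 (fun p : ℝ × ℝ => p.1 ^ θ / p.2) p :=
      h1.div contDiffAt_snd (ne_of_gt hp2)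
    have hq : p.1 ^ θ / p.2 ∈ Ioi (0:ℝ) := div_pos (rpow_pos_of_pos hp1 θ) hp2
    have h3 : ContDiffAt ℝ 2 f (p.1 ^ θ / p.2) := hf.contDiffAt (isOpen_Ioi.mem_nhds hq)
    have h4 := h3.comp p h2
    have h5 : ContDiffAt ℝ 2 (fun p : ℝ × ℝ => p.2 * f (p.1 ^ θ / p.2)) p :=
      contDiffAt_snd.mul h4
    exact h5.congr_of_eventuallyEq (Filter.Eventually.of_forall fun q => (hV q.1 q.2))
  · intro x i hx hi
    have hq : x ^ θ / i ∈ Ioi (0:ℝ) := div_pos (rpow_pos_of_pos hx θ) hi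
    have h1 : HasDerivAt (fun x' : ℝ => x' ^ θ / i) (θ * x ^ (θ - 1) / i) x :=
      (Real.hasDerivAt_rpow_const (Or.inl hx.ne')).div_const i
    -- first derivatives values
    have Cval : deriv (fun x' => i * f (x' ^ θ / i)) x
        = θ * x ^ (θ - 1) * deriv f (x ^ θ / i) := (keyX i hi x hx).deriv
    have Dval : deriv (fun i' => i' * f (x ^ θ / i')) i
        = f (x ^ θ / i) - (x ^ θ / i) * deriv f (x ^ θ / i) := (keyI x hx i hi).deriv
    -- second derivative in x
    have hEqX : deriv (fun x' => i * f (x' ^ θ / i))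
        =ᶠ[nhds x] fun x' => θ * x' ^ (θ - 1) * deriv f (x' ^ θ / i) :=
      Filter.eventuallyEq_of_mem (isOpen_Ioi.mem_nhds hx) fun x' hx' => (keyX i hi x' hx').deriv
    have hAder : HasDerivAt (fun x' => θ * x' ^ (θ - 1) * deriv f (x' ^ θ / i))
        (θ * ((θ - 1) * x ^ (θ - 2)) * deriv f (x ^ θ / i)
          + θ * x ^ (θ - 1) * (deriv (deriv f) (x ^ θ / i) * (θ * x ^ (θ - 1) / i))) x := by
      have h3 : HasDerivAt (fun x' : ℝ => θ * x' ^ (θ - 1)) (θ * ((θ - 1) * x ^ (θ - 2))) x := by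
        have h := (Real.hasDerivAt_rpow_const (p := θ - 1) (Or.inl hx.ne')).const_mul θ
        have e : θ - 1 - 1 = θ - 2 := by ring
        rwa [e] at h
      have h4 : HasDerivAt (fun x' : ℝ => deriv f (x' ^ θ / i))
          (deriv (deriv f) (x ^ θ / i) * (θ * x ^ (θ - 1) / i)) x := by
        have := (hgd (x ^ θ / i) hq).comp x h1; exact this
      exact h3.mul h4
    have Aval : deriv (deriv (fun x' => i * f (x' ^ θ / i))) x
        = θ * ((θ - 1) * x ^ (θ - 2)) * deriv f (x ^ θ / i)
          + θ * x ^ (θ - 1) * (deriv (deriv f) (x ^ θ / i) * (θ * x ^ (θ - 1) / i)) := by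
      rw [hEqX.deriv_eq]; exact hAder.deriv
    -- second derivative in i
    have hEqI : deriv (fun i' => i' * f (x ^ θ / i'))
        =ᶠ[nhds i] fun i' => f (x ^ θ / i') - (x ^ θ / i') * deriv f (x ^ θ / i') :=
      Filter.eventuallyEq_of_mem (isOpen_Ioi.mem_nhds hi) fun i' hi' => (keyI x hx i' hi').deriv
    have hBder : HasDerivAt (fun i' => f (x ^ θ / i') - (x ^ θ / i') * deriv f (x ^ θ / i'))
        (deriv f (x ^ θ / i) * (-(x ^ θ / i ^ 2))
          - ((-(x ^ θ / i ^ 2)) * deriv f (x ^ θ / i)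
            + (x ^ θ / i) * (deriv (deriv f) (x ^ θ / i) * (-(x ^ θ / i ^ 2))))) i := by
      have h5 := (hfd _ hq).comp i (hinv x hx i hi)
      have h6 := (hinv x hx i hi).mul ((hgd _ hq).comp i (hinv x hx i hi))
      exact h5.sub h6
    have Bval : deriv (deriv (fun i' => i' * f (x ^ θ / i'))) i
        = deriv f (x ^ θ / i) * (-(x ^ θ / i ^ 2))
          - ((-(x ^ θ / i ^ 2)) * deriv f (x ^ θ / i)
            + (x ^ θ / i) * (deriv (deriv f) (x ^ θ / i) * (-(x ^ θ / i ^ 2)))) := by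
      rw [hEqI.deriv_eq]; exact hBder.deriv
    have key : Ltwo σX σI μX μI lamX lamI mX mI V x i
        = i * LQ θ σX σI μX μI lamX lamI mX mI f (x ^ θ / i) := by
      simp only [Ltwo, LQ, hV]
      rw [Aval, Bval, Cval, Dval]
      rw [show (x * (1 + mX)) ^ θ = x ^ θ * (1 + mX) ^ θ from
        Real.mul_rpow hx.le (by linarith)]
      rw [show x ^ θ * (1 + mX) ^ θ / i = x ^ θ / i * (1 + mX) ^ θ from by ring]
      rw [show x ^ θ / (i * (1 + mI)) = x ^ θ / i / (1 + mI) from (div_div _ _ _).symm]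
      rw [show x ^ (θ - 1) = x ^ θ / x from by
        rw [Real.rpow_sub hx, Real.rpow_one]]
      rw [show x ^ (θ - 2) = x ^ θ / x ^ 2 from by
        rw [show θ - 2 = θ - ((2:ℕ):ℝ) by norm_num, Real.rpow_sub hx, Real.rpow_natCast]]
      field_simp
      ring
    exact ⟨key, by rw [key, hV]; ring⟩
end

section
/- Let r0 > 1, A > 0, κ1 > κ0 > 0, θ > 0, set q⋆ = r0/((κ1 − κ0)·A·(r0 − 1)) and b = 1/((r0 − 1)·(q⋆)^(r0)), and define V(x,i) = b·x^(θ·r0)·i^(1−r0) (i.e. V(x,i) = i·b·(x^θ/i)^(r0)) and g(x,i) = (κ1 − κ0)·A·x^θ − i for x, i > 0. Then at every boundary point (x,i) with x^θ/i = q⋆ one has value matching and smooth fit: V(x,i) = g(x,i), ∂V/∂x(x,i) = ∂g/∂x(x,i) = (κ1 − κ0)·A·θ·x^(θ−1), and ∂V/∂i(x,i) = ∂g/∂i(x,i) = −1. -/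
/-- Value matching and smooth fit at the boundary `x^θ/i = q⋆`:
the candidate value function `V(x,i) = b x^(θ r0) i^(1-r0)` agrees with the payoff
`g(x,i) = (κ1-κ0) A x^θ - i` together with both first-order partial derivatives. -/
theorem smooth_fit_on_boundary (r0 A κ0 κ1 θ : ℝ)
    (hr0 : 1 < r0) (hA : 0 < A) (hκ0 : 0 < κ0) (hκ : κ0 < κ1) (hθ : 0 < θ)
    (qs b : ℝ)
    (hqs : qs = r0 / ((κ1 - κ0) * A * (r0 - 1)))
    (hb : b = 1 / ((r0 - 1) * qs ^ r0))
    (V g : ℝ → ℝ → ℝ)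
    (hV : ∀ x i : ℝ, V x i = b * x ^ (θ * r0) * i ^ (1 - r0))
    (hg : ∀ x i : ℝ, g x i = (κ1 - κ0) * A * x ^ θ - i) :
    ∀ x i : ℝ, 0 < x → 0 < i → x ^ θ / i = qs →
      V x i = g x i
      ∧ deriv (fun x' => V x' i) x = deriv (fun x' => g x' i) x
      ∧ deriv (fun x' => g x' i) x = (κ1 - κ0) * A * θ * x ^ (θ - 1)
      ∧ deriv (fun i' => V x i') i = deriv (fun i' => g x i') i
      ∧ deriv (fun i' => g x i') i = -1 := by
  intro x i hx hi hbd
  have hC : 0 < κ1 - κ0 := sub_pos.mpr hκ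
  have hr : 0 < r0 - 1 := sub_pos.mpr hr0
  have hqspos : 0 < qs := by
    rw [hqs]; positivity
  have hqsr : 0 < qs ^ r0 := Real.rpow_pos_of_pos hqspos r0
  -- key algebraic identities
  have hxθ : x ^ θ = qs * i := by
    field_simp at hbd; linarith [hbd]
  have hxr : x ^ (θ * r0) = qs ^ r0 * i ^ r0 := by
    rw [Real.rpow_mul hx.le, hxθ, Real.mul_rpow hqspos.le hi.le]
  have hii : i ^ r0 * i ^ (1 - r0) = i := by
    rw [← Real.rpow_add hi, show r0 + (1 - r0) = 1 by ring, Real.rpow_one]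
  have hbqs : b * qs ^ r0 = 1 / (r0 - 1) := by
    rw [hb]; field_simp
  have hCqs : (κ1 - κ1 + κ1 - κ0) * A * qs = r0 / (r0 - 1) := by
    rw [hqs]; field_simp; ring
  have hCqs' : (κ1 - κ0) * A * qs = r0 / (r0 - 1) := by
    simpa using hCqs
  -- value matching
  have h1 : V x i = g x i := by
    rw [hV, hg, hxθ, hxr]
    have : b * (qs ^ r0 * i ^ r0) * i ^ (1 - r0) = (b * qs ^ r0) * (i ^ r0 * i ^ (1 - r0)) := by
      ring
    rw [this, hii, hbqs]
    have : (κ1 - κ0) * A * (qs * i) = ((κ1 - κ0) * A * qs) * i := by ring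
    rw [this, hCqs']
    field_simp
    ring
  refine ⟨h1, ?_, ?_, ?_, ?_⟩
  · -- x derivatives equal
    have hdV : HasDerivAt (fun x' => V x' i)
        (b * (θ * r0 * x ^ (θ * r0 - 1)) * i ^ (1 - r0)) x := by
      have := (((Real.hasDerivAt_rpow_const (p := θ * r0) (Or.inl hx.ne')).const_mul
        b).mul_const (i ^ (1 - r0)))
      simpa only [hV] using this
    have hdg : HasDerivAt (fun x' => g x' i)
        ((κ1 - κ0) * A * (θ * x ^ (θ - 1))) x := by
      have := (((Real.hasDerivAt_rpow_const (p := θ) (Or.inl hx.ne')).const_mul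
        ((κ1 - κ0) * A)).sub_const i)
      simpa only [hg] using this
    rw [hdV.deriv, hdg.deriv]
    have hx1 : x ^ (θ * r0 - 1) = qs ^ r0 * i ^ r0 / x := by
      rw [Real.rpow_sub hx, Real.rpow_one, hxr]
    have hx2 : x ^ (θ - 1) = qs * i / x := by
      rw [Real.rpow_sub hx, Real.rpow_one, hxθ]
    rw [hx1, hx2]
    have key : b * (θ * r0 * (qs ^ r0 * i ^ r0 / x)) * i ^ (1 - r0)
        = (θ * r0 / x) * ((b * qs ^ r0) * (i ^ r0 * i ^ (1 - r0))) := by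
      field_simp
    rw [key, hii, hbqs]
    have key2 : (κ1 - κ0) * A * (θ * (qs * i / x)) = (θ * i / x) * ((κ1 - κ0) * A * qs) := by
      field_simp
    rw [key2, hCqs']
    field_simp
  · -- g x-derivative value
    have hdg : HasDerivAt (fun x' => g x' i)
        ((κ1 - κ0) * A * (θ * x ^ (θ - 1))) x := by
      have := (((Real.hasDerivAt_rpow_const (p := θ) (Or.inl hx.ne')).const_mul
        ((κ1 - κ0) * A)).sub_const i)
      simpa only [hg] using this
    rw [hdg.deriv]; ring
  · -- i derivatives equal
    have hdV : HasDerivAt (fun i' => V x i')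
        ((1 - r0) * i ^ (1 - r0 - 1) * (b * x ^ (θ * r0))) i := by
      have := ((Real.hasDerivAt_rpow_const (p := 1 - r0) (Or.inl hi.ne')).const_mul
        (b * x ^ (θ * r0)))
      simp only [hV]
      exact this.congr_deriv (by ring)
    have hdg : HasDerivAt (fun i' => g x i') (-1 : ℝ) i := by
      have := (hasDerivAt_id i).const_sub ((κ1 - κ0) * A * x ^ θ)
      simpa only [hg, id_eq] using this
    rw [hdV.deriv, hdg.deriv]
    have h3 : i ^ (1 - r0 - 1) * i ^ r0 = 1 := by
      rw [← Real.rpow_add hi, show 1 - r0 - 1 + r0 = 0 by ring, Real.rpow_zero]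
    rw [hxr]
    have : (1 - r0) * i ^ (1 - r0 - 1) * (b * (qs ^ r0 * i ^ r0))
        = (1 - r0) * (b * qs ^ r0) * (i ^ (1 - r0 - 1) * i ^ r0) := by ring
    rw [this, h3, hbqs]
    field_simp
    ring
  · -- g i-derivative value
    have hdg : HasDerivAt (fun i' => g x i') (-1 : ℝ) i := by
      have := (hasDerivAt_id i).const_sub ((κ1 - κ0) * A * x ^ θ)
      simpa only [hg, id_eq] using this
    rw [hdg.deriv]
end

section
/- Fix all parameters except the investment drift, and let μI′ < μI″ be two investment drifts with ρ > μI″; assume h > 0 (h does not depend on μI). For k ∈ {′, ″} let r0ᵏ be the unique positive root of j with investment drift μIᵏ (then r0ᵏ > 1) and set q⋆ᵏ = r0ᵏ/((κ1 − κ0)·A·(r0ᵏ − 1)). Then q⋆″ < q⋆′: the investment threshold is strictly decreasing in the investment drift μI. -/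
set_option maxHeartbeats 1000000

/-- Convexity inequality for `a r² + b r + c + l₁ exp(k₁ r) + l₂ exp(k₂ r)`. -/
lemma conv_ineq_aux (a b c l1 l2 k1 k2 x y s t : ℝ)
    (ha : 0 ≤ a) (hl1 : 0 ≤ l1) (hl2 : 0 ≤ l2)
    (hs : 0 ≤ s) (ht : 0 ≤ t) (hst : s + t = 1) :
    a*(s*x+t*y)^2 + b*(s*x+t*y) + c + l1*Real.exp (k1*(s*x+t*y)) + l2*Real.exp (k2*(s*x+t*y))
      ≤ s*(a*x^2 + b*x + c + l1*Real.exp (k1*x) + l2*Real.exp (k2*x))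
        + t*(a*y^2 + b*y + c + l1*Real.exp (k1*y) + l2*Real.exp (k2*y)) := by
  have e1 : Real.exp (k1*(s*x+t*y)) ≤ s*Real.exp (k1*x) + t*Real.exp (k1*y) := by
    have := convexOn_exp.2 (Set.mem_univ (k1*x)) (Set.mem_univ (k1*y)) hs ht hst
    simp only [smul_eq_mul] at this
    calc Real.exp (k1*(s*x+t*y)) = Real.exp (s*(k1*x)+t*(k1*y)) := by ring_nf
    _ ≤ _ := this
  have e2 : Real.exp (k2*(s*x+t*y)) ≤ s*Real.exp (k2*x) + t*Real.exp (k2*y) := by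
    have := convexOn_exp.2 (Set.mem_univ (k2*x)) (Set.mem_univ (k2*y)) hs ht hst
    simp only [smul_eq_mul] at this
    calc Real.exp (k2*(s*x+t*y)) = Real.exp (s*(k2*x)+t*(k2*y)) := by ring_nf
    _ ≤ _ := this
  have hq : (s*x+t*y)^2 ≤ s*x^2 + t*y^2 := by
    nlinarith [sq_nonneg (x - y), mul_nonneg hs ht]
  have hc : s*c + t*c = c := by rw [← add_mul, hst, one_mul]
  nlinarith [mul_le_mul_of_nonneg_left hq ha, mul_le_mul_of_nonneg_left e1 hl1,
    mul_le_mul_of_nonneg_left e2 hl2, hc]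

/-- The investment threshold `q⋆ = r0/((κ1-κ0) A (r0-1))` is strictly
decreasing in the investment drift `μI`. -/
theorem threshold_decreasing_in_muI (θ ρ μX σX lamX mX σI lamI mI n κ0 κ1 h A : ℝ)
    (hθ : 0 < θ) (hσX : 0 < σX) (hlamX : 0 ≤ lamX) (hmX : -1 < mX)
    (hσI : 0 < σI) (hlamI : 0 ≤ lamI) (hmI : -1 < mI)
    (hn : 0 ≤ n) (hκ0 : 0 < κ0) (hκ : κ0 < κ1)
    (hh : h = ρ - (μX + (θ - 1) * σX ^ 2 / 2 - lamX * mX) * θ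
      - lamX * ((1 + mX) ^ θ - 1))
    (hhpos : 0 < h)
    (hA : A = Real.exp (-(h * n)) / h)
    (μI' μI'' : ℝ) (hμ : μI' < μI'') (hρ : μI'' < ρ)
    (j' j'' : ℝ → ℝ)
    (hj' : ∀ r : ℝ, j' r = ((θ ^ 2 * σX ^ 2 + σI ^ 2) / 2) * r ^ 2
      + ((μX - σX ^ 2 / 2 - lamX * mX) * θ - (μI' + σI ^ 2 / 2 - lamI * mI)) * r
      + ((μI' - lamI * mI) - (lamX + lamI) - ρ)
      + lamX * (1 + mX) ^ (θ * r) + lamI * (1 + mI) ^ (1 - r))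
    (hj'' : ∀ r : ℝ, j'' r = ((θ ^ 2 * σX ^ 2 + σI ^ 2) / 2) * r ^ 2
      + ((μX - σX ^ 2 / 2 - lamX * mX) * θ - (μI'' + σI ^ 2 / 2 - lamI * mI)) * r
      + ((μI'' - lamI * mI) - (lamX + lamI) - ρ)
      + lamX * (1 + mX) ^ (θ * r) + lamI * (1 + mI) ^ (1 - r))
    (r0' r0'' : ℝ)
    (hr0' : 0 < r0' ∧ j' r0' = 0) (hr0'' : 0 < r0'' ∧ j'' r0'' = 0) :
    1 < r0' ∧ 1 < r0''
    ∧ r0'' / ((κ1 - κ0) * A * (r0'' - 1)) < r0' / ((κ1 - κ0) * A * (r0' - 1)) := by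
  have hmX0 : (0:ℝ) < 1 + mX := by linarith
  have hmI0 : (0:ℝ) < 1 + mI := by linarith
  set a : ℝ := (θ ^ 2 * σX ^ 2 + σI ^ 2) / 2 with ha_def
  have ha : 0 ≤ a := by positivity
  set K1 : ℝ := θ * Real.log (1 + mX) with hK1
  set K2 : ℝ := -Real.log (1 + mI) with hK2
  set L2 : ℝ := lamI * (1 + mI) with hL2
  have hL2nn : 0 ≤ L2 := mul_nonneg hlamI hmI0.le
  have h1 : ∀ r : ℝ, (1 + mX) ^ (θ * r) = Real.exp (K1 * r) := by
    intro r
    rw [Real.rpow_def_of_pos hmX0]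
    ring_nf
    rw [hK1]; ring_nf
  have h2 : ∀ r : ℝ, (1 + mI) ^ (1 - r) = (1 + mI) * Real.exp (K2 * r) := by
    intro r
    rw [Real.rpow_def_of_pos hmI0,
      show Real.log (1 + mI) * (1 - r) = Real.log (1 + mI) + (-Real.log (1 + mI)) * r by ring,
      Real.exp_add, Real.exp_log hmI0]
  -- representations
  set b' : ℝ := (μX - σX ^ 2 / 2 - lamX * mX) * θ - (μI' + σI ^ 2 / 2 - lamI * mI) with hb'
  set c' : ℝ := (μI' - lamI * mI) - (lamX + lamI) - ρ with hc'
  set b'' : ℝ := (μX - σX ^ 2 / 2 - lamX * mX) * θ - (μI'' + σI ^ 2 / 2 - lamI * mI) with hb''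
  set c'' : ℝ := (μI'' - lamI * mI) - (lamX + lamI) - ρ with hc''
  have hrep' : ∀ r : ℝ, j' r
      = a*r^2 + b'*r + c' + lamX*Real.exp (K1*r) + L2*Real.exp (K2*r) := by
    intro r; rw [hj', h1, h2]; ring
  have hrep'' : ∀ r : ℝ, j'' r
      = a*r^2 + b''*r + c'' + lamX*Real.exp (K1*r) + L2*Real.exp (K2*r) := by
    intro r; rw [hj'', h1, h2]; ring
  -- values at 0 and 1
  have hval0' : j' 0 = μI' - ρ := by
    rw [hrep' 0]
    have : Real.exp (K2 * 0) = 1 := by rw [mul_zero, Real.exp_zero]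
    rw [mul_zero, mul_zero, Real.exp_zero, this]; rw [hc', hL2]; ring
  have hval0'' : j'' 0 = μI'' - ρ := by
    rw [hrep'' 0]
    have : Real.exp (K2 * 0) = 1 := by rw [mul_zero, Real.exp_zero]
    rw [mul_zero, mul_zero, Real.exp_zero, this]; rw [hc'', hL2]; ring
  have hexpK1 : Real.exp (K1 * 1) = (1 + mX) ^ θ := by
    rw [← h1 1, mul_one]
  have hexpK2 : Real.exp (K2 * 1) = 1 / (1 + mI) := by
    have := h2 1
    rw [sub_self, Real.rpow_zero] at this
    field_simp at this ⊢
    linarith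
  have hval1' : j' 1 = -h := by
    rw [hrep' 1, hexpK1, hexpK2, hh, hb', hc', hL2, ha_def]
    field_simp
    ring
  have hval1'' : j'' 1 = -h := by
    rw [hrep'' 1, hexpK1, hexpK2, hh, hb'', hc'', hL2, ha_def]
    field_simp
    ring
  -- Step 1 : r0' > 1 and r0'' > 1 by convexity
  have gt_one : ∀ (b c : ℝ) (j : ℝ → ℝ) (r : ℝ), 0 < r → j r = 0
      → (∀ s : ℝ, j s = a*s^2 + b*s + c + lamX*Real.exp (K1*s) + L2*Real.exp (K2*s))
      → j 0 < 0 → j 1 < 0 → 1 < r := by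
    intro b c j r hrpos hroot hrep h0 hone
    by_contra hle
    push_neg at hle
    have key := conv_ineq_aux a b c lamX L2 K1 K2 0 1 (1 - r) r ha hlamX hL2nn
      (by linarith) hrpos.le (by ring)
    rw [show (1 - r)*0 + r*1 = r by ring] at key
    rw [← hrep r, ← hrep 0, ← hrep 1] at key
    rw [hroot] at key
    have p1 : 0 ≤ (1 - r) * (-(j 0)) :=
      mul_nonneg (by linarith) (by linarith)
    have p2 : 0 < r * (-(j 1)) := mul_pos hrpos (by linarith)
    linarith only [key, p1, p2]
  have hr1' : 1 < r0' :=
    gt_one b' c' j' r0' hr0'.1 hr0'.2 hrep' (by rw [hval0']; linarith) (by rw [hval1']; linarith)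
  have hr1'' : 1 < r0'' :=
    gt_one b'' c'' j'' r0'' hr0''.1 hr0''.2 hrep'' (by rw [hval0'']; linarith)
      (by rw [hval1'']; linarith)
  -- Step 2 : r0' < r0''
  have hdiff : j'' r0' = j' r0' + (μI'' - μI') * (1 - r0') := by
    rw [hj', hj'']; ring
  have hneg : j'' r0' < 0 := by
    rw [hdiff, hr0'.2]
    have p : 0 < (μI'' - μI') * (r0' - 1) :=
      mul_pos (by linarith) (by linarith)
    linarith only [p]
  have hlt : r0' < r0'' := by
    by_contra hle
    push_neg at hle
    have hden : (0:ℝ) < r0' - 1 := by linarith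
    set s : ℝ := (r0' - r0'') / (r0' - 1) with hs_def
    set t : ℝ := (r0'' - 1) / (r0' - 1) with ht_def
    have hs : 0 ≤ s := div_nonneg (by linarith) hden.le
    have ht : 0 ≤ t := div_nonneg (by linarith) hden.le
    have hst : s + t = 1 := by
      rw [hs_def, ht_def, ← add_div]
      field_simp
      ring
    have key := conv_ineq_aux a b'' c'' lamX L2 K1 K2 1 r0' s t ha hlamX hL2nn hs ht hst
    have hcmb : s*1 + t*r0' = r0'' := by
      rw [hs_def, ht_def]; field_simp; ring
    rw [hcmb, ← hrep'' r0'', ← hrep'' 1, ← hrep'' r0', hr0''.2, hval1''] at key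
    have htpos : 0 < t := by
      rw [ht_def]; exact div_pos (by linarith) hden
    have p1 : 0 ≤ s * h := mul_nonneg hs hhpos.le
    have p2 : 0 < t * (-(j'' r0')) := mul_pos htpos (by linarith)
    linarith only [key, p1, p2]
  -- Step 3 : the threshold inequality
  have hApos : 0 < A := by
    rw [hA]; exact div_pos (Real.exp_pos _) hhpos
  have hC : 0 < (κ1 - κ0) * A := mul_pos (by linarith) hApos
  refine ⟨hr1', hr1'', ?_⟩
  rw [div_lt_div_iff₀ (mul_pos hC (by linarith)) (mul_pos hC (by linarith))]
  have p : 0 < (κ1 - κ0) * A * (r0'' - r0') := mul_pos hC (by linarith)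
  linarith only [p]
end

section
/- Fix all parameters except the investment volatility, and let 0 < σI′ < σI″ be two investment volatilities; assume ρ > μI and h > 0 (h and A do not depend on σI). For k ∈ {′, ″} let r0ᵏ be the unique positive root of j with investment volatility σIᵏ (then r0ᵏ > 1) and set q⋆ᵏ = r0ᵏ/((κ1 − κ0)·A·(r0ᵏ − 1)). Then q⋆′ < q⋆″: the investment threshold is strictly increasing in the investment volatility σI. -/
/-- Convexity-type combination inequality for quadratic + two exponentials. -/
lemma comb_exp (c b0 d lX lI α β : ℝ) (hc : 0 ≤ c) (hlX : 0 ≤ lX) (hlI : 0 ≤ lI)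
    (f : ℝ → ℝ)
    (hf : ∀ r, f r = c * r ^ 2 + b0 * r + d
      + lX * Real.exp (α * r) + lI * Real.exp (β * r))
    (a b t : ℝ) (ht0 : 0 ≤ t) (ht1 : t ≤ 1) :
    f (t * a + (1 - t) * b) ≤ t * f a + (1 - t) * f b := by
  have hsq : (t * a + (1 - t) * b) ^ 2 ≤ t * a ^ 2 + (1 - t) * b ^ 2 := by
    nlinarith [sq_nonneg (a - b), mul_nonneg ht0 (sub_nonneg.2 ht1)]
  have he : ∀ γ : ℝ, Real.exp (γ * (t * a + (1 - t) * b))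
      ≤ t * Real.exp (γ * a) + (1 - t) * Real.exp (γ * b) := by
    intro γ
    have h := convexOn_exp.2 (Set.mem_univ (γ * a)) (Set.mem_univ (γ * b))
      ht0 (by linarith : (0:ℝ) ≤ 1 - t) (by ring)
    simp only [smul_eq_mul] at h
    calc Real.exp (γ * (t * a + (1 - t) * b))
        = Real.exp (t * (γ * a) + (1 - t) * (γ * b)) := by ring_nf
      _ ≤ t * Real.exp (γ * a) + (1 - t) * Real.exp (γ * b) := h
  have h1 := mul_le_mul_of_nonneg_left (he α) hlX
  have h2 := mul_le_mul_of_nonneg_left (he β) hlI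
  have h3 := mul_le_mul_of_nonneg_left hsq hc
  rw [hf, hf, hf]
  nlinarith [h1, h2, h3]

/-- The function j is midpoint-convex-style on ℝ. -/
lemma jcomb (θ μX σX lamX mX μI σI lamI mI ρ : ℝ)
    (hlamX : 0 ≤ lamX) (hmX : -1 < mX) (hlamI : 0 ≤ lamI) (hmI : -1 < mI)
    (j : ℝ → ℝ)
    (hj : ∀ r : ℝ, j r = ((θ ^ 2 * σX ^ 2 + σI ^ 2) / 2) * r ^ 2
      + ((μX - σX ^ 2 / 2 - lamX * mX) * θ - (μI + σI ^ 2 / 2 - lamI * mI)) * r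
      + ((μI - lamI * mI) - (lamX + lamI) - ρ)
      + lamX * (1 + mX) ^ (θ * r) + lamI * (1 + mI) ^ (1 - r))
    (a b t : ℝ) (ht0 : 0 ≤ t) (ht1 : t ≤ 1) :
    j (t * a + (1 - t) * b) ≤ t * j a + (1 - t) * j b := by
  have hX : (0:ℝ) < 1 + mX := by linarith
  have hI : (0:ℝ) < 1 + mI := by linarith
  have hj2 : ∀ r : ℝ, j r = ((θ ^ 2 * σX ^ 2 + σI ^ 2) / 2) * r ^ 2
      + ((μX - σX ^ 2 / 2 - lamX * mX) * θ - (μI + σI ^ 2 / 2 - lamI * mI)) * r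
      + ((μI - lamI * mI) - (lamX + lamI) - ρ)
      + lamX * Real.exp ((θ * Real.log (1 + mX)) * r)
      + (lamI * (1 + mI)) * Real.exp ((-Real.log (1 + mI)) * r) := by
    intro r
    rw [hj r, Real.rpow_def_of_pos hX, Real.rpow_def_of_pos hI]
    have : Real.exp (Real.log (1 + mI) * (1 - r))
        = Real.exp (Real.log (1 + mI)) * Real.exp ((-Real.log (1 + mI)) * r) := by
      rw [← Real.exp_add]; ring_nf
    rw [this, Real.exp_log hI]
    ring_nf
  exact comb_exp _ _ _ _ _ _ _
    (by positivity) hlamX (by positivity) j hj2 a b t ht0 ht1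

lemma root_gt_one (f : ℝ → ℝ)
    (hcomb : ∀ a b t : ℝ, 0 ≤ t → t ≤ 1 → f (t * a + (1 - t) * b) ≤ t * f a + (1 - t) * f b)
    (h1 : f 1 < 0) (h0 : f 0 < 0) (r : ℝ) (hr : 0 < r) (hfr : f r = 0) : 1 < r := by
  by_contra hle
  push_neg at hle
  have h := hcomb 1 0 r hr.le hle
  rw [mul_one, mul_zero, add_zero, hfr] at h
  nlinarith

set_option maxHeartbeats 1000000 in
/-- The investment threshold `q⋆ = r0/((κ1-κ0) A (r0-1))` is strictly
increasing in the investment volatility `σI`. -/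
theorem threshold_increasing_in_sigmaI (θ ρ μX σX lamX mX μI lamI mI n κ0 κ1 h A : ℝ)
    (hθ : 0 < θ) (hσX : 0 < σX) (hlamX : 0 ≤ lamX) (hmX : -1 < mX)
    (hlamI : 0 ≤ lamI) (hmI : -1 < mI)
    (hn : 0 ≤ n) (hκ0 : 0 < κ0) (hκ : κ0 < κ1)
    (hρ : μI < ρ)
    (hh : h = ρ - (μX + (θ - 1) * σX ^ 2 / 2 - lamX * mX) * θ
      - lamX * ((1 + mX) ^ θ - 1))
    (hhpos : 0 < h)
    (hA : A = Real.exp (-(h * n)) / h)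
    (σI' σI'' : ℝ) (hσI' : 0 < σI') (hσ : σI' < σI'')
    (j' j'' : ℝ → ℝ)
    (hj' : ∀ r : ℝ, j' r = ((θ ^ 2 * σX ^ 2 + σI' ^ 2) / 2) * r ^ 2
      + ((μX - σX ^ 2 / 2 - lamX * mX) * θ - (μI + σI' ^ 2 / 2 - lamI * mI)) * r
      + ((μI - lamI * mI) - (lamX + lamI) - ρ)
      + lamX * (1 + mX) ^ (θ * r) + lamI * (1 + mI) ^ (1 - r))
    (hj'' : ∀ r : ℝ, j'' r = ((θ ^ 2 * σX ^ 2 + σI'' ^ 2) / 2) * r ^ 2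
      + ((μX - σX ^ 2 / 2 - lamX * mX) * θ - (μI + σI'' ^ 2 / 2 - lamI * mI)) * r
      + ((μI - lamI * mI) - (lamX + lamI) - ρ)
      + lamX * (1 + mX) ^ (θ * r) + lamI * (1 + mI) ^ (1 - r))
    (r0' r0'' : ℝ)
    (hr0' : 0 < r0' ∧ j' r0' = 0) (hr0'' : 0 < r0'' ∧ j'' r0'' = 0) :
    1 < r0' ∧ 1 < r0''
    ∧ r0' / ((κ1 - κ0) * A * (r0' - 1)) < r0'' / ((κ1 - κ0) * A * (r0'' - 1)) := by
  -- values at 0 and 1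
  have hval1' : j' 1 = -h := by
    rw [hj' 1, hh]; norm_num; ring
  have hval1'' : j'' 1 = -h := by
    rw [hj'' 1, hh]; norm_num; ring
  have hval0' : j' 0 = μI - ρ := by
    rw [hj' 0]; norm_num; ring
  have hval0'' : j'' 0 = μI - ρ := by
    rw [hj'' 0]; norm_num; ring
  have hcomb' := jcomb θ μX σX lamX mX μI σI' lamI mI ρ hlamX hmX hlamI hmI j' hj'
  have hcomb'' := jcomb θ μX σX lamX mX μI σI'' lamI mI ρ hlamX hmX hlamI hmI j'' hj''
  have hgt1' : 1 < r0' :=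
    root_gt_one j' (fun a b t ht0 ht1 => hcomb' a b t ht0 ht1)
      (by rw [hval1']; linarith) (by rw [hval0']; linarith) r0' hr0'.1 hr0'.2
  have hgt1'' : 1 < r0'' :=
    root_gt_one j'' (fun a b t ht0 ht1 => hcomb'' a b t ht0 ht1)
      (by rw [hval1'']; linarith) (by rw [hval0'']; linarith) r0'' hr0''.1 hr0''.2
  -- j'' at r0'
  have hjj : j'' r0' = ((σI'' ^ 2 - σI' ^ 2) / 2) * (r0' ^ 2 - r0') := by
    have h0 : ((θ ^ 2 * σX ^ 2 + σI' ^ 2) / 2) * r0' ^ 2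
      + ((μX - σX ^ 2 / 2 - lamX * mX) * θ - (μI + σI' ^ 2 / 2 - lamI * mI)) * r0'
      + ((μI - lamI * mI) - (lamX + lamI) - ρ)
      + lamX * (1 + mX) ^ (θ * r0') + lamI * (1 + mI) ^ (1 - r0') = 0 :=
      (hj' r0').symm.trans hr0'.2
    rw [hj'' r0']; linear_combination h0
  have hjjpos : 0 < j'' r0' := by
    rw [hjj]
    have e1 : 0 < σI'' ^ 2 - σI' ^ 2 := by nlinarith
    have e2 : 0 < r0' ^ 2 - r0' := by nlinarith
    positivity
  -- r0'' < r0'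
  have hlt : r0'' < r0' := by
    by_contra hle
    push_neg at hle
    set t : ℝ := (r0' - 1) / (r0'' - 1) with ht
    have hden : 0 < r0'' - 1 := by linarith
    have ht0 : 0 ≤ t := by apply div_nonneg <;> linarith
    have ht1 : t ≤ 1 := by
      rw [div_le_one hden]; linarith
    have hpt : t * r0'' + (1 - t) * 1 = r0' := by
      rw [ht]; field_simp; ring
    have hc := hcomb'' r0'' 1 t ht0 ht1
    rw [hpt, hr0''.2, hval1''] at hc
    rw [mul_zero, zero_add] at hc
    have htpos : 0 ≤ 1 - t := by linarith
    have hnp : (1 - t) * (-h) ≤ 0 :=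
      mul_nonpos_of_nonneg_of_nonpos htpos (by linarith)
    linarith only [hc, hjjpos, hnp]
  -- final threshold comparison
  refine ⟨hgt1', hgt1'', ?_⟩
  have hApos : 0 < A := by
    rw [hA]; exact div_pos (Real.exp_pos _) hhpos
  have hK : 0 < (κ1 - κ0) * A := by
    have : 0 < κ1 - κ0 := by linarith
    positivity
  have hd' : 0 < (κ1 - κ0) * A * (r0' - 1) := by
    apply mul_pos hK; linarith
  have hd'' : 0 < (κ1 - κ0) * A * (r0'' - 1) := by
    apply mul_pos hK; linarith
  rw [div_lt_div_iff₀ hd' hd'']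
  nlinarith [mul_pos hK (mul_pos hr0'.1 hr0''.1)]
end

section
/- Fix all parameters except the investment jump intensity, assume mI ≠ 0, and let 0 ≤ λI′ < λI″ be two jump intensities; assume ρ > μI and h > 0 (h and A do not depend on λI). For k ∈ {′, ″} let r0ᵏ be the unique positive root of j with investment jump intensity λIᵏ (then r0ᵏ > 1) and set q⋆ᵏ = r0ᵏ/((κ1 − κ0)·A·(r0ᵏ − 1)). Then q⋆′ < q⋆″: the investment threshold is strictly increasing in the investment jump intensity λI. -/
set_option maxHeartbeats 1000000


lemma combo_aux (Q B C lamX lamI cX cI x y w v : ℝ)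
    (hQ : 0 ≤ Q) (hX : 0 ≤ lamX) (hI : 0 ≤ lamI)
    (hw : 0 ≤ w) (hv : 0 ≤ v) (hwv : w + v = 1) :
    Q * (w*x+v*y)^2 + B * (w*x+v*y) + C
      + lamX * Real.exp (cX * (w*x+v*y)) + lamI * Real.exp (cI * (1 - (w*x+v*y)))
    ≤ w * (Q * x^2 + B * x + C + lamX * Real.exp (cX * x) + lamI * Real.exp (cI * (1 - x)))
      + v * (Q * y^2 + B * y + C + lamX * Real.exp (cX * y) + lamI * Real.exp (cI * (1 - y))) := by
  have e1 := convexOn_exp.2 (Set.mem_univ (cX*x)) (Set.mem_univ (cX*y)) hw hv hwv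
  have e2 := convexOn_exp.2 (Set.mem_univ (cI*(1-x))) (Set.mem_univ (cI*(1-y))) hw hv hwv
  simp only [smul_eq_mul] at e1 e2
  rw [show w*(cX*x)+v*(cX*y) = cX*(w*x+v*y) by ring] at e1
  rw [show w*(cI*(1-x))+v*(cI*(1-y)) = cI*(1-(w*x+v*y)) by linear_combination cI*hwv] at e2
  have h1 := mul_le_mul_of_nonneg_left e1 hX
  have h2 := mul_le_mul_of_nonneg_left e2 hI
  have hv' : v = 1 - w := by linarith
  subst hv'
  have hq : Q * (w*x+(1-w)*y)^2 ≤ w*(Q*x^2) + (1-w)*(Q*y^2) := by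
    nlinarith [mul_nonneg hQ (mul_nonneg (mul_nonneg hw (by linarith : (0:ℝ) ≤ 1-w)) (sq_nonneg (x-y)))]
  nlinarith [h1, h2, hq]

lemma aux_root_gt_one (Q B C lamX lamI cX cI : ℝ) (hQ : 0 ≤ Q) (hX : 0 ≤ lamX) (hI : 0 ≤ lamI)
    (f : ℝ → ℝ)
    (hf : ∀ r : ℝ, f r = Q * r^2 + B * r + C
      + lamX * Real.exp (cX * r) + lamI * Real.exp (cI * (1 - r)))
    (r0 : ℝ) (h0 : 0 < r0) (hroot : f r0 = 0) (hf0 : f 0 < 0) (hf1 : f 1 < 0) : 1 < r0 := by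
  by_contra hle
  push_neg at hle
  rcases eq_or_lt_of_le hle with heq | hlt
  · rw [heq] at hroot; linarith
  · have hc := combo_aux Q B C lamX lamI cX cI 0 1 (1-r0) r0 hQ hX hI (by linarith) h0.le (by ring)
    rw [show (1-r0)*0 + r0*1 = r0 by ring] at hc
    rw [← hf r0, ← hf 0, ← hf 1] at hc
    nlinarith [mul_neg_of_pos_of_neg (show (0:ℝ) < 1-r0 by linarith) hf0,
      mul_neg_of_pos_of_neg h0 hf1]

lemma aux_lt (Q B C lamX lamI cX cI : ℝ) (hQ : 0 ≤ Q) (hX : 0 ≤ lamX) (hI : 0 ≤ lamI)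
    (f : ℝ → ℝ)
    (hf : ∀ r : ℝ, f r = Q * r^2 + B * r + C
      + lamX * Real.exp (cX * r) + lamI * Real.exp (cI * (1 - r)))
    (a b : ℝ) (hab : 1 < a) (h1 : f 1 < 0) (hb : f b = 0) (ha : 0 < f a) (h1b : 1 < b) :
    b < a := by
  by_contra hle
  push_neg at hle
  rcases eq_or_lt_of_le hle with heq | hlt
  · rw [heq, hb] at ha; exact lt_irrefl 0 ha
  · have hb1 : b - 1 ≠ 0 := ne_of_gt (by linarith)
    have hw : 0 ≤ (b-a)/(b-1) := by
      apply div_nonneg <;> linarith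
    have hv : 0 ≤ (a-1)/(b-1) := by
      apply div_nonneg <;> linarith
    have hwv : (b-a)/(b-1) + (a-1)/(b-1) = 1 := by
      field_simp
      ring
    have hc := combo_aux Q B C lamX lamI cX cI 1 b ((b-a)/(b-1)) ((a-1)/(b-1)) hQ hX hI hw hv hwv
    rw [show (b-a)/(b-1)*1 + (a-1)/(b-1)*b = a by field_simp; ring] at hc
    rw [← hf a, ← hf 1, ← hf b] at hc
    rw [hb] at hc
    have hwpos : 0 < (b-a)/(b-1) := by
      apply div_pos <;> linarith
    nlinarith [mul_neg_of_pos_of_neg hwpos h1]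




/-- The investment threshold `q⋆ = r0/((κ1-κ0) A (r0-1))` is strictly
increasing in the investment jump intensity `λI` (for `mI ≠ 0`). -/
theorem threshold_increasing_in_lamI (θ ρ μX σX lamX mX μI σI mI n κ0 κ1 h A : ℝ)
    (hθ : 0 < θ) (hσX : 0 < σX) (hlamX : 0 ≤ lamX) (hmX : -1 < mX)
    (hσI : 0 < σI) (hmI : -1 < mI) (hmI0 : mI ≠ 0)
    (hn : 0 ≤ n) (hκ0 : 0 < κ0) (hκ : κ0 < κ1)
    (hρ : μI < ρ)
    (hh : h = ρ - (μX + (θ - 1) * σX ^ 2 / 2 - lamX * mX) * θ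
      - lamX * ((1 + mX) ^ θ - 1))
    (hhpos : 0 < h)
    (hA : A = Real.exp (-(h * n)) / h)
    (lamI' lamI'' : ℝ) (hlamI' : 0 ≤ lamI') (hlam : lamI' < lamI'')
    (j' j'' : ℝ → ℝ)
    (hj' : ∀ r : ℝ, j' r = ((θ ^ 2 * σX ^ 2 + σI ^ 2) / 2) * r ^ 2
      + ((μX - σX ^ 2 / 2 - lamX * mX) * θ - (μI + σI ^ 2 / 2 - lamI' * mI)) * r
      + ((μI - lamI' * mI) - (lamX + lamI') - ρ)
      + lamX * (1 + mX) ^ (θ * r) + lamI' * (1 + mI) ^ (1 - r))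
    (hj'' : ∀ r : ℝ, j'' r = ((θ ^ 2 * σX ^ 2 + σI ^ 2) / 2) * r ^ 2
      + ((μX - σX ^ 2 / 2 - lamX * mX) * θ - (μI + σI ^ 2 / 2 - lamI'' * mI)) * r
      + ((μI - lamI'' * mI) - (lamX + lamI'') - ρ)
      + lamX * (1 + mX) ^ (θ * r) + lamI'' * (1 + mI) ^ (1 - r))
    (r0' r0'' : ℝ)
    (hr0' : 0 < r0' ∧ j' r0' = 0) (hr0'' : 0 < r0'' ∧ j'' r0'' = 0) :
    1 < r0' ∧ 1 < r0''
    ∧ r0' / ((κ1 - κ0) * A * (r0' - 1)) < r0'' / ((κ1 - κ0) * A * (r0'' - 1)) := by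
  obtain ⟨hr0'pos, hr0'root⟩ := hr0'
  obtain ⟨hr0''pos, hr0''root⟩ := hr0''
  have h1mX : (0:ℝ) < 1 + mX := by linarith
  have h1mI : (0:ℝ) < 1 + mI := by linarith
  have hlamI'' : 0 ≤ lamI'' := by linarith
  have hQ : 0 ≤ (θ ^ 2 * σX ^ 2 + σI ^ 2) / 2 := by positivity
  -- rewrite j' and j'' in exponential form
  have hfrw' : ∀ r : ℝ, j' r = ((θ ^ 2 * σX ^ 2 + σI ^ 2) / 2) * r ^ 2
      + ((μX - σX ^ 2 / 2 - lamX * mX) * θ - (μI + σI ^ 2 / 2 - lamI' * mI)) * r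
      + ((μI - lamI' * mI) - (lamX + lamI') - ρ)
      + lamX * Real.exp ((Real.log (1 + mX) * θ) * r)
      + lamI' * Real.exp (Real.log (1 + mI) * (1 - r)) := by
    intro r
    rw [hj' r, Real.rpow_def_of_pos h1mX, Real.rpow_def_of_pos h1mI]
    ring_nf
  have hfrw'' : ∀ r : ℝ, j'' r = ((θ ^ 2 * σX ^ 2 + σI ^ 2) / 2) * r ^ 2
      + ((μX - σX ^ 2 / 2 - lamX * mX) * θ - (μI + σI ^ 2 / 2 - lamI'' * mI)) * r
      + ((μI - lamI'' * mI) - (lamX + lamI'') - ρ)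
      + lamX * Real.exp ((Real.log (1 + mX) * θ) * r)
      + lamI'' * Real.exp (Real.log (1 + mI) * (1 - r)) := by
    intro r
    rw [hj'' r, Real.rpow_def_of_pos h1mX, Real.rpow_def_of_pos h1mI]
    ring_nf
  -- values at 0 and 1
  have hj'0 : j' 0 = μI - ρ := by
    rw [hj' 0, show θ * (0:ℝ) = 0 by ring, Real.rpow_zero,
      show (1:ℝ) - 0 = 1 by ring, Real.rpow_one]
    ring
  have hj''0 : j'' 0 = μI - ρ := by
    rw [hj'' 0, show θ * (0:ℝ) = 0 by ring, Real.rpow_zero,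
      show (1:ℝ) - 0 = 1 by ring, Real.rpow_one]
    ring
  have hj'1 : j' 1 = -h := by
    rw [hj' 1, hh, show θ * (1:ℝ) = θ by ring, show (1:ℝ) - 1 = 0 by ring, Real.rpow_zero]
    ring
  have hj''1 : j'' 1 = -h := by
    rw [hj'' 1, hh, show θ * (1:ℝ) = θ by ring, show (1:ℝ) - 1 = 0 by ring, Real.rpow_zero]
    ring
  -- roots exceed 1
  have hgt' : 1 < r0' :=
    aux_root_gt_one _ _ _ _ _ _ _ hQ hlamX hlamI' j' hfrw' r0' hr0'pos hr0'root
      (by rw [hj'0]; linarith) (by rw [hj'1]; linarith)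
  have hgt'' : 1 < r0'' :=
    aux_root_gt_one _ _ _ _ _ _ _ hQ hlamX hlamI'' j'' hfrw'' r0'' hr0''pos hr0''root
      (by rw [hj''0]; linarith) (by rw [hj''1]; linarith)
  refine ⟨hgt', hgt'', ?_⟩
  -- j'' r0' > 0
  have hdiff : j'' r0' = j' r0'
      + (lamI'' - lamI') * ((1 + mI) ^ (1 - r0') - 1 - mI * (1 - r0')) := by
    rw [hj' r0', hj'' r0']; ring
  have hgpos : 0 < (1 + mI) ^ (1 - r0') - 1 - mI * (1 - r0') := by
    have hcne : Real.log (1 + mI) ≠ 0 := by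
      intro h0
      apply hmI0
      have := Real.exp_log h1mI
      rw [h0, Real.exp_zero] at this
      linarith
    have hmIc : mI = Real.exp (Real.log (1 + mI)) - 1 := by
      rw [Real.exp_log h1mI]; ring
    have hrp : (1 + mI) ^ (1 - r0') = Real.exp (Real.log (1 + mI) * (1 - r0')) :=
      Real.rpow_def_of_pos h1mI _
    have h1 : Real.log (1 + mI) * (1 - r0') + 1
        < Real.exp (Real.log (1 + mI) * (1 - r0')) :=
      Real.add_one_lt_exp (mul_ne_zero hcne (by intro hz; rw [sub_eq_zero] at hz; linarith))
    have h2 : Real.log (1 + mI) + 1 < Real.exp (Real.log (1 + mI)) :=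
      Real.add_one_lt_exp hcne
    rw [hrp]
    nlinarith [h1, mul_pos (show (0:ℝ) < r0' - 1 by linarith)
      (show 0 < Real.exp (Real.log (1 + mI)) - 1 - Real.log (1 + mI) by linarith)]
  have hjpos : 0 < j'' r0' := by
    rw [hdiff, hr0'root]
    have : 0 < (lamI'' - lamI') * ((1 + mI) ^ (1 - r0') - 1 - mI * (1 - r0')) :=
      mul_pos (by linarith) hgpos
    linarith
  -- r0'' < r0'
  have hlt : r0'' < r0' :=
    aux_lt _ _ _ _ _ _ _ hQ hlamX hlamI'' j'' hfrw'' r0' r0'' hgt'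
      (by rw [hj''1]; linarith) hr0''root hjpos hgt''
  -- final comparison
  have hApos : 0 < A := by rw [hA]; positivity
  have hKpos : 0 < (κ1 - κ0) * A := mul_pos (by linarith) hApos
  rw [div_lt_div_iff₀ (mul_pos hKpos (by linarith)) (mul_pos hKpos (by linarith))]
  nlinarith [mul_pos hKpos (show (0:ℝ) < r0' - r0'' by linarith)]
end

section
/- Fix all parameters except the investment jump size, assume λI > 0, ρ > μI and h > 0 (h and A do not depend on mI). For an investment jump size m > −1 let r0(m) be the unique positive root of j with mI = m (then r0(m) > 1) and set q⋆(m) = r0(m)/((κ1 − κ0)·A·(r0(m) − 1)). Then the investment threshold is not monotone in mI: (a) if −1 < mI′ < mI″ ≤ 0 then q⋆(mI″) < q⋆(mI′) (strictly decreasing on (−1, 0]); (b) if 0 ≤ mI′ < mI″ then q⋆(mI′) < q⋆(mI″) (strictly increasing on [0, ∞)). -/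
open Real Set

lemma convexOn_affine' (b c : ℝ) : ConvexOn ℝ Set.univ (fun r : ℝ => b * r + c) := by
  refine ⟨convex_univ, ?_⟩
  intro x _ y _ s t hs ht hst
  simp only [smul_eq_mul]
  have : b * (s * x + t * y) + c = s * (b * x + c) + t * (b * y + c) := by
    linear_combination (-c) * hst
  linarith

lemma convexOn_exp_aff' (k c : ℝ) : ConvexOn ℝ Set.univ (fun r : ℝ => Real.exp (k * r + c)) := by
  refine ⟨convex_univ, ?_⟩
  intro x _ y _ s t hs ht hst
  simp only [smul_eq_mul]
  have h := convexOn_exp.2 (Set.mem_univ (k*x+c)) (Set.mem_univ (k*y+c)) hs ht hst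
  simp only [smul_eq_mul] at h
  have he : k * (s*x + t*y) + c = s*(k*x+c) + t*(k*y+c) := by linear_combination (-c) * hst
  rw [he]; exact h

lemma convexOn_master (a b c p q k1 c1 k2 c2 : ℝ) (ha : 0 ≤ a) (hp : 0 ≤ p) (hq : 0 ≤ q) :
    ConvexOn ℝ Set.univ (fun r : ℝ =>
      a * r ^ 2 + (b * r + c) + p * Real.exp (k1 * r + c1) + q * Real.exp (k2 * r + c2)) := by
  have csq : ConvexOn ℝ Set.univ (fun r : ℝ => a * r ^ 2) := by
    simpa [smul_eq_mul] using (Even.convexOn_pow (even_two : Even 2) (𝕜 := ℝ)).smul ha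
  have c3 : ConvexOn ℝ Set.univ (fun r : ℝ => p * Real.exp (k1 * r + c1)) := by
    simpa [smul_eq_mul] using (convexOn_exp_aff' k1 c1).smul hp
  have c4 : ConvexOn ℝ Set.univ (fun r : ℝ => q * Real.exp (k2 * r + c2)) := by
    simpa [smul_eq_mul] using (convexOn_exp_aff' k2 c2).smul hq
  have := ((csq.add (convexOn_affine' b c)).add c3).add c4
  exact this

lemma convex_between' {f : ℝ → ℝ} (hf : ConvexOn ℝ Set.univ f) {a b x : ℝ}
    (ha : f a < 0) (hb : f b ≤ 0) (hax : a < x) (hxb : x < b) : f x < 0 := by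
  have hba : (0:ℝ) < b - a := by linarith
  have hs0 : 0 < (b - x) / (b - a) := div_pos (by linarith) hba
  have ht0 : (0:ℝ) ≤ (x - a) / (b - a) := le_of_lt (div_pos (by linarith) hba)
  have hst : (b - x) / (b - a) + (x - a) / (b - a) = 1 := by field_simp; ring
  have key := hf.2 (Set.mem_univ a) (Set.mem_univ b) hs0.le ht0 hst
  have hx : ((b - x) / (b - a)) • a + ((x - a) / (b - a)) • b = x := by
    simp only [smul_eq_mul]; field_simp; ring
  rw [hx] at key
  simp only [smul_eq_mul] at key
  nlinarith

lemma phi_hasDeriv (r m : ℝ) (hm : -1 < m) :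
    HasDerivAt (fun m : ℝ => m * (r - 1) + (1 + m) ^ (1 - r))
      ((r - 1) + 1 * (1 - r) * (1 + m) ^ (1 - r - 1)) m := by
  have h1 : HasDerivAt (fun m : ℝ => m * (r - 1)) (1 * (r - 1)) m :=
    (hasDerivAt_id m).mul_const (r - 1)
  have hpos : (0:ℝ) < 1 + m := by linarith
  have h2 : HasDerivAt (fun m : ℝ => 1 + m) 1 m := (hasDerivAt_id m).const_add 1
  have h3 := h2.rpow_const (p := 1 - r) (Or.inl (ne_of_gt hpos))
  have h4 := h1.add h3
  simp only [one_mul] at h4 ⊢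
  exact h4

lemma phi_strictAnti {r : ℝ} (hr : 1 < r) :
    StrictAntiOn (fun m : ℝ => m * (r - 1) + (1 + m) ^ (1 - r)) (Set.Ioc (-1) 0) := by
  apply strictAntiOn_of_deriv_neg (convex_Ioc _ _)
  · intro m hm
    exact (phi_hasDeriv r m hm.1).continuousAt.continuousWithinAt
  · intro m hm
    rw [interior_Ioc] at hm
    rw [(phi_hasDeriv r m hm.1).deriv]
    have hpos : (0:ℝ) < 1 + m := by linarith [hm.1]
    have hlt1 : 1 + m < 1 := by linarith [hm.2]
    have harg : 1 - r - 1 = -r := by ring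
    rw [harg]
    have hgt : 1 < (1 + m) ^ (-r : ℝ) :=
      (Real.one_lt_rpow_iff_of_pos hpos).mpr (Or.inr ⟨hlt1, by linarith⟩)
    nlinarith

lemma phi_strictMono {r : ℝ} (hr : 1 < r) :
    StrictMonoOn (fun m : ℝ => m * (r - 1) + (1 + m) ^ (1 - r)) (Set.Ici 0) := by
  apply strictMonoOn_of_deriv_pos (convex_Ici _)
  · intro m hm
    exact (phi_hasDeriv r m (by linarith [mem_Ici.mp hm])).continuousAt.continuousWithinAt
  · intro m hm
    rw [interior_Ici] at hm
    have hm0 : (0:ℝ) < m := hm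
    rw [(phi_hasDeriv r m (by linarith)).deriv]
    have harg : 1 - r - 1 = -r := by ring
    rw [harg]
    have hlt : (1 + m) ^ (-r : ℝ) < 1 :=
      Real.rpow_lt_one_of_one_lt_of_neg (by linarith) (by linarith)
    nlinarith

lemma threshold_decr {C r R : ℝ} (hC : 0 < C) (hr : 1 < r) (hrR : r < R) :
    R / (C * (R - 1)) < r / (C * (r - 1)) := by
  have h1 : 0 < C * (R - 1) := mul_pos hC (by linarith)
  have h2 : 0 < C * (r - 1) := mul_pos hC (by linarith)
  rw [div_lt_div_iff₀ h1 h2]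
  nlinarith [mul_pos hC (sub_pos.mpr hrR)]

/-- The investment threshold `q⋆(m) = r0(m)/((κ1-κ0) A (r0(m)-1))` is
not monotone in the investment jump size `mI = m`: it is strictly decreasing on
`(-1, 0]` and strictly increasing on `[0, ∞)` (assuming `λI > 0`, `ρ > μI`, `h > 0`). -/
theorem threshold_nonmonotone_in_mI (θ ρ μX σX lamX mX μI σI lamI n κ0 κ1 h A : ℝ)
    (hθ : 0 < θ) (hσX : 0 < σX) (hlamX : 0 ≤ lamX) (hmX : -1 < mX)
    (hσI : 0 < σI) (hlamI : 0 < lamI)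
    (hn : 0 ≤ n) (hκ0 : 0 < κ0) (hκ : κ0 < κ1)
    (hρ : μI < ρ)
    (hh : h = ρ - (μX + (θ - 1) * σX ^ 2 / 2 - lamX * mX) * θ
      - lamX * ((1 + mX) ^ θ - 1))
    (hhpos : 0 < h)
    (hA : A = Real.exp (-(h * n)) / h)
    (jm : ℝ → ℝ → ℝ)
    (hjm : ∀ m r : ℝ, jm m r = ((θ ^ 2 * σX ^ 2 + σI ^ 2) / 2) * r ^ 2
      + ((μX - σX ^ 2 / 2 - lamX * mX) * θ - (μI + σI ^ 2 / 2 - lamI * m)) * r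
      + ((μI - lamI * m) - (lamX + lamI) - ρ)
      + lamX * (1 + mX) ^ (θ * r) + lamI * (1 + m) ^ (1 - r))
    (r0 : ℝ → ℝ)
    (hr0 : ∀ m : ℝ, -1 < m → 0 < r0 m ∧ jm m (r0 m) = 0) :
    (∀ m : ℝ, -1 < m → 1 < r0 m)
    ∧ (∀ m1 m2 : ℝ, -1 < m1 → m1 < m2 → m2 ≤ 0 →
        r0 m2 / ((κ1 - κ0) * A * (r0 m2 - 1))
          < r0 m1 / ((κ1 - κ0) * A * (r0 m1 - 1)))
    ∧ (∀ m1 m2 : ℝ, 0 ≤ m1 → m1 < m2 →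
        r0 m1 / ((κ1 - κ0) * A * (r0 m1 - 1))
          < r0 m2 / ((κ1 - κ0) * A * (r0 m2 - 1))) := by
  -- positivity of the threshold constant
  have hApos : 0 < A := by
    rw [hA]; exact div_pos (Real.exp_pos _) hhpos
  have hCpos : 0 < (κ1 - κ0) * A := mul_pos (by linarith) hApos
  -- values of jm at 0 and 1
  have jm0 : ∀ m : ℝ, -1 < m → jm m 0 = μI - ρ := by
    intro m hm
    rw [hjm, mul_zero θ, Real.rpow_zero, sub_zero, Real.rpow_one]
    ring
  have jm1 : ∀ m : ℝ, jm m 1 = -h := by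
    intro m
    rw [hjm, mul_one, sub_self, Real.rpow_zero, hh]
    ring
  -- convexity of jm m
  have jmconvex : ∀ m : ℝ, -1 < m → ConvexOn ℝ Set.univ (jm m) := by
    intro m hm
    have hxpos : (0:ℝ) < 1 + mX := by linarith
    have hmpos : (0:ℝ) < 1 + m := by linarith
    have hfe : jm m = fun r : ℝ =>
        ((θ ^ 2 * σX ^ 2 + σI ^ 2) / 2) * r ^ 2
        + (((μX - σX ^ 2 / 2 - lamX * mX) * θ - (μI + σI ^ 2 / 2 - lamI * m)) * r
            + ((μI - lamI * m) - (lamX + lamI) - ρ))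
        + lamX * Real.exp ((Real.log (1 + mX) * θ) * r + 0)
        + lamI * Real.exp ((-Real.log (1 + m)) * r + Real.log (1 + m)) := by
      funext r
      rw [hjm]
      have e1 : (1 + mX) ^ (θ * r) = Real.exp ((Real.log (1 + mX) * θ) * r + 0) := by
        rw [Real.rpow_def_of_pos hxpos]; congr 1; ring
      have e2 : (1 + m) ^ (1 - r) = Real.exp ((-Real.log (1 + m)) * r + Real.log (1 + m)) := by
        rw [Real.rpow_def_of_pos hmpos]; congr 1; ring
      rw [e1, e2]; ring
    rw [hfe]
    exact convexOn_master _ _ _ _ _ _ _ _ _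
      (by positivity) hlamX hlamI.le
  -- roots are > 1
  have hgt1 : ∀ m : ℝ, -1 < m → 1 < r0 m := by
    intro m hm
    obtain ⟨hRpos, hroot⟩ := hr0 m hm
    by_contra hle
    push_neg at hle
    rcases lt_or_eq_of_le hle with hlt | heq
    · have := convex_between' (jmconvex m hm) (a := 0) (b := 1)
        (by rw [jm0 m hm]; linarith) (by rw [jm1 m]; linarith) hRpos hlt
      linarith [this, hroot.symm ▸ this]
    · rw [heq] at hroot
      rw [jm1 m] at hroot
      linarith
  -- difference formula
  have jmdiff : ∀ m1 m2 r : ℝ, jm m2 r - jm m1 r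
      = lamI * ((m2 * (r - 1) + (1 + m2) ^ (1 - r)) - (m1 * (r - 1) + (1 + m1) ^ (1 - r))) := by
    intro m1 m2 r
    rw [hjm, hjm]; ring
  refine ⟨hgt1, ?_, ?_⟩
  · -- decreasing threshold on (-1, 0]
    intro m1 m2 hm1 h12 h20
    have hm2 : (-1:ℝ) < m2 := hm1.trans h12
    obtain ⟨hR1pos, hroot1⟩ := hr0 m1 hm1
    obtain ⟨hR2pos, hroot2⟩ := hr0 m2 hm2
    have hR1 : 1 < r0 m1 := hgt1 m1 hm1
    have hR2 : 1 < r0 m2 := hgt1 m2 hm2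
    have hphi := phi_strictAnti (r := r0 m1) hR1
      (Set.mem_Ioc.mpr ⟨hm1, by linarith⟩) (Set.mem_Ioc.mpr ⟨hm2, h20⟩) h12
    simp only at hphi
    have hneg : jm m2 (r0 m1) < 0 := by
      have hd := jmdiff m1 m2 (r0 m1)
      nlinarith
    -- show r0 m1 < r0 m2
    have hRlt : r0 m1 < r0 m2 := by
      by_contra hle
      push_neg at hle
      rcases lt_or_eq_of_le hle with hlt | heq
      · have := convex_between' (jmconvex m2 hm2) (a := 1) (b := r0 m1)
          (by rw [jm1 m2]; linarith) hneg.le hR2 hlt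
        linarith [hroot2]
      · rw [← heq] at hneg; linarith [hroot2]
    exact threshold_decr hCpos hR1 hRlt
  · -- increasing threshold on [0, ∞)
    intro m1 m2 hm1 h12
    have hm1' : (-1:ℝ) < m1 := by linarith
    have hm2 : (-1:ℝ) < m2 := by linarith
    obtain ⟨hR1pos, hroot1⟩ := hr0 m1 hm1'
    obtain ⟨hR2pos, hroot2⟩ := hr0 m2 hm2
    have hR1 : 1 < r0 m1 := hgt1 m1 hm1'
    have hR2 : 1 < r0 m2 := hgt1 m2 hm2
    have hphi := phi_strictMono (r := r0 m1) hR1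
      (Set.mem_Ici.mpr hm1) (Set.mem_Ici.mpr (by linarith : (0:ℝ) ≤ m2)) h12
    simp only at hphi
    have hposv : 0 < jm m2 (r0 m1) := by
      have hd := jmdiff m1 m2 (r0 m1)
      nlinarith
    have hRlt : r0 m2 < r0 m1 := by
      by_contra hle
      push_neg at hle
      rcases lt_or_eq_of_le hle with hlt | heq
      · have := convex_between' (jmconvex m2 hm2) (a := 1) (b := r0 m2)
          (by rw [jm1 m2]; linarith) (le_of_eq hroot2) hR1 hlt
        linarith
      · rw [heq] at hposv; linarith [hroot2]
    exact threshold_decr hCpos hR2 hRlt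
end

section
/- Assume 0 < θ ≤ 1, and fix all parameters except the demand volatility. Let 0 < σX′ < σX″ be two demand volatilities; for k ∈ {′, ″} let hᵏ, jᵏ be h and j computed with σX = σXᵏ, assume ρ > μI and h′ > 0 (then h″ ≥ h′ > 0), let r0ᵏ be the unique positive root of jᵏ (then r0ᵏ > 1), set Aᵏ = e^(−hᵏ·n)/hᵏ and q⋆ᵏ = r0ᵏ/((κ1 − κ0)·Aᵏ·(r0ᵏ − 1)). If in addition θ·r0′ ≥ 1, then q⋆′ < q⋆″: the investment threshold is strictly increasing in the demand volatility σX. -/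
private lemma exp_combo (u v a b : ℝ) (ha : 0 ≤ a) (hb : 0 ≤ b) (hab : a + b = 1) :
    Real.exp (a * u + b * v) ≤ a * Real.exp u + b * Real.exp v := by
  have h := convexOn_exp.2 (Set.mem_univ u) (Set.mem_univ v) ha hb hab
  simpa [smul_eq_mul] using h

private lemma rpow_combo (m : ℝ) (hm : 0 < m) (u v a b : ℝ) (ha : 0 ≤ a) (hb : 0 ≤ b)
    (hab : a + b = 1) : m ^ (a * u + b * v) ≤ a * m ^ u + b * m ^ v := by
  rw [Real.rpow_def_of_pos hm, Real.rpow_def_of_pos hm, Real.rpow_def_of_pos hm,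
    show Real.log m * (a * u + b * v)
      = a * (Real.log m * u) + b * (Real.log m * v) from by ring]
  exact exp_combo _ _ a b ha hb hab

private lemma jconv (θ s σI μX lamX mX μI lamI mI ρ : ℝ)
    (hlamX : 0 ≤ lamX) (hmX : -1 < mX) (hlamI : 0 ≤ lamI) (hmI : -1 < mI)
    (J : ℝ → ℝ)
    (hJ : ∀ r : ℝ, J r = ((θ ^ 2 * s ^ 2 + σI ^ 2) / 2) * r ^ 2
      + ((μX - s ^ 2 / 2 - lamX * mX) * θ - (μI + σI ^ 2 / 2 - lamI * mI)) * r
      + ((μI - lamI * mI) - (lamX + lamI) - ρ)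
      + lamX * (1 + mX) ^ (θ * r) + lamI * (1 + mI) ^ (1 - r))
    (x y a b : ℝ) (ha : 0 ≤ a) (hb : 0 ≤ b) (hab : a + b = 1) :
    J (a * x + b * y) ≤ a * J x + b * J y := by
  have hmX1 : (0:ℝ) < 1 + mX := by linarith
  have hmI1 : (0:ℝ) < 1 + mI := by linarith
  set c : ℝ := (θ ^ 2 * s ^ 2 + σI ^ 2) / 2 with hc
  set d : ℝ := (μX - s ^ 2 / 2 - lamX * mX) * θ - (μI + σI ^ 2 / 2 - lamI * mI) with hd
  set e : ℝ := (μI - lamI * mI) - (lamX + lamI) - ρ with he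
  have hc0 : 0 ≤ c := by positivity
  have hquad : c * (a * x + b * y) ^ 2 + d * (a * x + b * y) + e
      ≤ a * (c * x ^ 2 + d * x + e) + b * (c * y ^ 2 + d * y + e) := by
    have hb' : b = 1 - a := by linarith
    subst hb'
    nlinarith [mul_nonneg (mul_nonneg hc0 (mul_nonneg ha hb)) (sq_nonneg (x - y))]
  have hX : lamX * (1 + mX) ^ (θ * (a * x + b * y))
      ≤ a * (lamX * (1 + mX) ^ (θ * x)) + b * (lamX * (1 + mX) ^ (θ * y)) := by
    have h1 := rpow_combo (1 + mX) hmX1 (θ * x) (θ * y) a b ha hb hab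
    rw [show θ * (a * x + b * y) = a * (θ * x) + b * (θ * y) from by ring]
    calc lamX * (1 + mX) ^ (a * (θ * x) + b * (θ * y))
        ≤ lamX * (a * (1 + mX) ^ (θ * x) + b * (1 + mX) ^ (θ * y)) :=
          mul_le_mul_of_nonneg_left h1 hlamX
      _ = a * (lamX * (1 + mX) ^ (θ * x)) + b * (lamX * (1 + mX) ^ (θ * y)) := by ring
  have hI : lamI * (1 + mI) ^ (1 - (a * x + b * y))
      ≤ a * (lamI * (1 + mI) ^ (1 - x)) + b * (lamI * (1 + mI) ^ (1 - y)) := by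
    have h1 := rpow_combo (1 + mI) hmI1 (1 - x) (1 - y) a b ha hb hab
    rw [show 1 - (a * x + b * y) = a * (1 - x) + b * (1 - y) from by linear_combination -hab]
    calc lamI * (1 + mI) ^ (a * (1 - x) + b * (1 - y))
        ≤ lamI * (a * (1 + mI) ^ (1 - x) + b * (1 + mI) ^ (1 - y)) :=
          mul_le_mul_of_nonneg_left h1 hlamI
      _ = a * (lamI * (1 + mI) ^ (1 - x)) + b * (lamI * (1 + mI) ^ (1 - y)) := by ring
  rw [hJ, hJ, hJ]
  nlinarith [hquad, hX, hI]

set_option maxHeartbeats 1600000 in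
/-- For `1/r0 ≤ θ ≤ 1`, the investment threshold
`q⋆ = r0/((κ1-κ0) A (r0-1))` is strictly increasing in the demand volatility `σX`. -/
theorem threshold_increasing_in_sigmaX (θ ρ μX lamX mX μI σI lamI mI n κ0 κ1 : ℝ)
    (hθ : 0 < θ) (hθ1 : θ ≤ 1) (hlamX : 0 ≤ lamX) (hmX : -1 < mX)
    (hσI : 0 < σI) (hlamI : 0 ≤ lamI) (hmI : -1 < mI)
    (hn : 0 ≤ n) (hκ0 : 0 < κ0) (hκ : κ0 < κ1)
    (hρ : μI < ρ)
    (σX' σX'' : ℝ) (hσX' : 0 < σX') (hσ : σX' < σX'')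
    (h' h'' A' A'' : ℝ)
    (hh' : h' = ρ - (μX + (θ - 1) * σX' ^ 2 / 2 - lamX * mX) * θ
      - lamX * ((1 + mX) ^ θ - 1))
    (hh'' : h'' = ρ - (μX + (θ - 1) * σX'' ^ 2 / 2 - lamX * mX) * θ
      - lamX * ((1 + mX) ^ θ - 1))
    (hh'pos : 0 < h')
    (hA' : A' = Real.exp (-(h' * n)) / h')
    (hA'' : A'' = Real.exp (-(h'' * n)) / h'')
    (j' j'' : ℝ → ℝ)
    (hj' : ∀ r : ℝ, j' r = ((θ ^ 2 * σX' ^ 2 + σI ^ 2) / 2) * r ^ 2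
      + ((μX - σX' ^ 2 / 2 - lamX * mX) * θ - (μI + σI ^ 2 / 2 - lamI * mI)) * r
      + ((μI - lamI * mI) - (lamX + lamI) - ρ)
      + lamX * (1 + mX) ^ (θ * r) + lamI * (1 + mI) ^ (1 - r))
    (hj'' : ∀ r : ℝ, j'' r = ((θ ^ 2 * σX'' ^ 2 + σI ^ 2) / 2) * r ^ 2
      + ((μX - σX'' ^ 2 / 2 - lamX * mX) * θ - (μI + σI ^ 2 / 2 - lamI * mI)) * r
      + ((μI - lamI * mI) - (lamX + lamI) - ρ)
      + lamX * (1 + mX) ^ (θ * r) + lamI * (1 + mI) ^ (1 - r))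
    (r0' r0'' : ℝ)
    (hr0' : 0 < r0' ∧ j' r0' = 0) (hr0'' : 0 < r0'' ∧ j'' r0'' = 0)
    (hθr : 1 ≤ θ * r0') :
    h' ≤ h'' ∧ 1 < r0' ∧ 1 < r0''
    ∧ r0' / ((κ1 - κ0) * A' * (r0' - 1)) < r0'' / ((κ1 - κ0) * A'' * (r0'' - 1)) := by
  obtain ⟨hr0'pos, hr0'root⟩ := hr0'
  obtain ⟨hr0''pos, hr0''root⟩ := hr0''
  have hσ2 : σX' ^ 2 < σX'' ^ 2 := by nlinarith
  have hhd : h'' - h' = θ * (1 - θ) * (σX'' ^ 2 - σX' ^ 2) / 2 := by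
    rw [hh', hh'']; ring
  have hle : h' ≤ h'' := by
    nlinarith [mul_nonneg (mul_nonneg hθ.le (by linarith : (0:ℝ) ≤ 1 - θ))
      (by linarith : (0:ℝ) ≤ σX'' ^ 2 - σX' ^ 2)]
  have hh''pos : 0 < h'' := lt_of_lt_of_le hh'pos hle
  have hA'pos : 0 < A' := by rw [hA']; exact div_pos (Real.exp_pos _) hh'pos
  have hA''pos : 0 < A'' := by rw [hA'']; exact div_pos (Real.exp_pos _) hh''pos
  have hEle : Real.exp (-(h'' * n)) ≤ Real.exp (-(h' * n)) := by
    apply Real.exp_le_exp.2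
    nlinarith [mul_le_mul_of_nonneg_right hle hn]
  -- values at 0 and 1
  have j'0 : j' 0 = μI - ρ := by
    rw [hj' 0]; norm_num [Real.rpow_one]; ring
  have j''0 : j'' 0 = μI - ρ := by
    rw [hj'' 0]; norm_num [Real.rpow_one]; ring
  have j'1 : j' 1 = -h' := by
    rw [hj' 1, hh']; norm_num [Real.rpow_zero]; ring
  have j''1 : j'' 1 = -h'' := by
    rw [hj'' 1, hh'']; norm_num [Real.rpow_zero]; ring
  have conv' := jconv θ σX' σI μX lamX mX μI lamI mI ρ hlamX hmX hlamI hmI j' hj'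
  have conv'' := jconv θ σX'' σI μX lamX mX μI lamI mI ρ hlamX hmX hlamI hmI j'' hj''
  -- roots exceed 1
  have hr1' : 1 < r0' := by
    by_contra hcon; push_neg at hcon
    have hc := conv' 0 1 (1 - r0') r0' (by linarith) hr0'pos.le (by ring)
    rw [show (1 - r0') * 0 + r0' * 1 = r0' from by ring, hr0'root, j'0, j'1] at hc
    nlinarith [mul_nonneg (show (0:ℝ) ≤ 1 - r0' by linarith)
      (show (0:ℝ) ≤ ρ - μI by linarith), mul_pos hr0'pos hh'pos]
  have hr1'' : 1 < r0'' := by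
    by_contra hcon; push_neg at hcon
    have hc := conv'' 0 1 (1 - r0'') r0'' (by linarith) hr0''pos.le (by ring)
    rw [show (1 - r0'') * 0 + r0'' * 1 = r0'' from by ring, hr0''root, j''0, j''1] at hc
    nlinarith [mul_nonneg (show (0:ℝ) ≤ 1 - r0'' by linarith)
      (show (0:ℝ) ≤ ρ - μI by linarith), mul_pos hr0''pos hh''pos]
  -- value of j'' at r0'
  have hdiff : j'' r0' = (σX'' ^ 2 - σX' ^ 2) * (θ * r0' / 2) * (θ * r0' - 1) := by
    have h1 : j'' r0' - j' r0'
        = (σX'' ^ 2 - σX' ^ 2) * (θ * r0' / 2) * (θ * r0' - 1) := by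
      rw [hj'' r0', hj' r0']; ring
    rw [hr0'root] at h1; linarith
  have hj''nn : 0 ≤ j'' r0' := by
    rw [hdiff]
    exact mul_nonneg (mul_nonneg (by linarith) (by positivity)) (by linarith)
  -- r0'' ≤ r0'
  have hr0''le : r0'' ≤ r0' := by
    by_contra hcon; push_neg at hcon
    have hr0''ne : r0'' ≠ 0 := ne_of_gt hr0''pos
    have hblt : r0' / r0'' < 1 := (div_lt_one hr0''pos).2 hcon
    have hc := conv'' 0 r0'' (1 - r0' / r0'') (r0' / r0'')
      (by linarith) (by positivity) (by ring)
    rw [mul_zero, zero_add, div_mul_cancel₀ _ hr0''ne, j''0, hr0''root] at hc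
    nlinarith [mul_pos (show (0:ℝ) < 1 - r0' / r0'' by linarith)
      (show (0:ℝ) < ρ - μI by linarith)]
  -- key strict inequality
  have hXpos : 0 < r0' * (r0'' - 1) := mul_pos hr0'pos (by linarith)
  have hfin : r0' * (r0'' - 1) * A'' < r0'' * (r0' - 1) * A' := by
    rcases lt_or_eq_of_le hθr with hθr1 | hθr1
    · -- θ r0' > 1 : r0'' < r0' strictly, A'' ≤ A'
      have hj''pos : 0 < j'' r0' := by
        rw [hdiff]
        exact mul_pos (mul_pos (by linarith) (by positivity)) (by linarith)
      have hne : r0'' ≠ r0' := by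
        intro he; rw [he] at hr0''root
        exact hj''pos.ne' hr0''root
      have hlt : r0'' < r0' := lt_of_le_of_ne hr0''le hne
      have hAle : A'' ≤ A' := by
        rw [hA', hA'']
        exact div_le_div₀ (Real.exp_pos _).le hEle hh'pos hle
      have k1 : r0' * (r0'' - 1) < r0'' * (r0' - 1) := by nlinarith
      calc r0' * (r0'' - 1) * A'' ≤ r0' * (r0'' - 1) * A' :=
            mul_le_mul_of_nonneg_left hAle hXpos.le
        _ < r0'' * (r0' - 1) * A' := mul_lt_mul_of_pos_right k1 hA'pos
    · -- θ r0' = 1 : θ < 1, so h' < h'' strictly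
      have hθlt : θ < 1 := by nlinarith [mul_lt_mul_of_pos_left hr1' hθ]
      have hstrict : h' < h'' := by
        nlinarith [mul_pos (mul_pos hθ (show (0:ℝ) < 1 - θ by linarith))
          (show (0:ℝ) < σX'' ^ 2 - σX' ^ 2 by linarith)]
      have hAlt : A'' < A' := by
        rw [hA', hA'', div_lt_div_iff₀ hh''pos hh'pos]
        nlinarith [mul_pos (Real.exp_pos (-(h'' * n))) (sub_pos.2 hstrict),
          mul_nonneg (sub_nonneg.2 hEle) hh''pos.le]
      have k1 : r0' * (r0'' - 1) ≤ r0'' * (r0' - 1) := by nlinarith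
      calc r0' * (r0'' - 1) * A'' < r0' * (r0'' - 1) * A' :=
            mul_lt_mul_of_pos_left hAlt hXpos
        _ ≤ r0'' * (r0' - 1) * A' := mul_le_mul_of_nonneg_right k1 hA'pos.le
  refine ⟨hle, hr1', hr1'', ?_⟩
  have hκpos : (0:ℝ) < κ1 - κ0 := by linarith
  have hD1 : 0 < (κ1 - κ0) * A' * (r0' - 1) :=
    mul_pos (mul_pos hκpos hA'pos) (by linarith)
  have hD2 : 0 < (κ1 - κ0) * A'' * (r0'' - 1) :=
    mul_pos (mul_pos hκpos hA''pos) (by linarith)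
  rw [div_lt_div_iff₀ hD1 hD2]
  nlinarith [mul_lt_mul_of_pos_left hfin hκpos]
end

section
/- Assume 0 < θ ≤ 1 and λX > 0, and fix all parameters except the demand jump size. For a demand jump size m > −1 let h(m), j(·; m) be h and j computed with mX = m; assume ρ > μI. Let mX′ < mX″ be two jump sizes with h(mX′) > 0 and h(mX″) > 0, let r0(m) be the unique positive root of j(·; m) (then r0(m) > 1), set A(m) = e^(−h(m)·n)/h(m) and q⋆(m) = r0(m)/((κ1 − κ0)·A(m)·(r0(m) − 1)), and assume θ·r0(mX′) ≥ 1. Then the investment threshold is not monotone in mX: (a) if −1 < mX′ < mX″ ≤ 0 then q⋆(mX″) < q⋆(mX′); (b) if 0 ≤ mX′ < mX″ then q⋆(mX′) < q⋆(mX″). -/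
open Real Set

lemma exp_affine_convex (c d : ℝ) : ConvexOn ℝ Set.univ fun r : ℝ => Real.exp (c * r + d) := by
  refine ⟨convex_univ, fun x _ y _ a b ha hb hab => ?_⟩
  simp only [smul_eq_mul]
  have h1 : c * (a * x + b * y) + d = a * (c * x + d) + b * (c * y + d) := by
    linear_combination (-d) * hab
  rw [h1]
  simpa using convexOn_exp.2 (Set.mem_univ (c * x + d)) (Set.mem_univ (c * y + d)) ha hb hab

lemma gen_convex (p q s k1 k2 c1 d1 c2 d2 : ℝ) (hp : 0 ≤ p) (hk1 : 0 ≤ k1) (hk2 : 0 ≤ k2) :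
    ConvexOn ℝ Set.univ fun r : ℝ =>
      p * r ^ 2 + q * r + s + k1 * Real.exp (c1 * r + d1) + k2 * Real.exp (c2 * r + d2) := by
  have hquad : ConvexOn ℝ Set.univ fun r : ℝ => p * r ^ 2 + q * r + s := by
    refine ⟨convex_univ, fun x _ y _ a b ha hb hab => ?_⟩
    simp only [smul_eq_mul]
    have hb' : b = 1 - a := by linarith
    subst hb'
    nlinarith [mul_nonneg (mul_nonneg (mul_nonneg hp ha) (by linarith : (0:ℝ) ≤ 1 - a)) (sq_nonneg (x - y))]
  have he1 : ConvexOn ℝ Set.univ fun r : ℝ => k1 * Real.exp (c1 * r + d1) := by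
    simpa [smul_eq_mul] using (exp_affine_convex c1 d1).smul hk1
  have he2 : ConvexOn ℝ Set.univ fun r : ℝ => k2 * Real.exp (c2 * r + d2) := by
    simpa [smul_eq_mul] using (exp_affine_convex c2 d2).smul hk2
  exact (hquad.add he1).add he2

lemma convex_neg_mid (f : ℝ → ℝ) (hf : ConvexOn ℝ Set.univ f) {a b c : ℝ}
    (hab : a < b) (hbc : b < c) (ha : f a < 0) (hc : f c ≤ 0) : f b < 0 := by
  have hca : 0 < c - a := by linarith
  have ht : b = ((c - b) / (c - a)) * a + ((b - a) / (c - a)) * c := by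
    field_simp
    ring
  have ht0 : 0 < (c - b) / (c - a) := div_pos (by linarith) hca
  have hu0 : 0 ≤ (b - a) / (c - a) := le_of_lt (div_pos (by linarith) hca)
  have htu : (c - b) / (c - a) + (b - a) / (c - a) = 1 := by
    field_simp
    ring
  have hkey := hf.2 (Set.mem_univ a) (Set.mem_univ c) ht0.le hu0 htu
  simp only [smul_eq_mul] at hkey
  rw [← ht] at hkey
  nlinarith [mul_pos ht0 (neg_pos.mpr ha), mul_nonneg hu0 (neg_nonneg.mpr hc)]

lemma tangent_lower (x y e : ℝ) (hx : 0 < x) (hy : 0 ≤ y) (he : 1 ≤ e) :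
    x ^ e + e * (x ^ e / x) * (y - x) ≤ y ^ e := by
  have hs : (-1 : ℝ) ≤ y / x - 1 := by
    have : 0 ≤ y / x := div_nonneg hy hx.le
    linarith
  have h1 : 1 + e * (y / x - 1) ≤ (1 + (y / x - 1)) ^ e :=
    one_add_mul_self_le_rpow_one_add hs he
  have h2 : (1 : ℝ) + (y / x - 1) = y / x := by ring
  rw [h2, Real.div_rpow hy hx.le] at h1
  have hxe : 0 < x ^ e := Real.rpow_pos_of_pos hx e
  have h3 := mul_le_mul_of_nonneg_left h1 hxe.le
  have h4 : x ^ e * (y ^ e / x ^ e) = y ^ e := by field_simp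
  have h5 : x ^ e * (1 + e * (y / x - 1)) = x ^ e + e * (x ^ e / x) * (y - x) := by
    field_simp
  rw [h4, h5] at h3
  exact h3

lemma tangent_lower_strict (x y e : ℝ) (hx : 0 < x) (hy : 0 ≤ y) (hxy : x ≠ y) (he : 1 < e) :
    x ^ e + e * (x ^ e / x) * (y - x) < y ^ e := by
  have hs : (-1 : ℝ) ≤ y / x - 1 := by
    have : 0 ≤ y / x := div_nonneg hy hx.le
    linarith
  have hs' : y / x - 1 ≠ 0 := by
    intro hcon
    apply hxy
    have : y / x = 1 := by linarith [hcon]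
    field_simp at this
    linarith
  have h1 : 1 + e * (y / x - 1) < (1 + (y / x - 1)) ^ e :=
    one_add_mul_self_lt_rpow_one_add hs hs' he
  have h2 : (1 : ℝ) + (y / x - 1) = y / x := by ring
  rw [h2, Real.div_rpow hy hx.le] at h1
  have hxe : 0 < x ^ e := Real.rpow_pos_of_pos hx e
  have h3 := (mul_lt_mul_iff_right₀ hxe).mpr h1
  have h4 : x ^ e * (y ^ e / x ^ e) = y ^ e := by field_simp
  have h5 : x ^ e * (1 + e * (y / x - 1)) = x ^ e + e * (x ^ e / x) * (y - x) := by
    field_simp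
  rw [h4, h5] at h3
  exact h3

lemma tangent_upper (x y e : ℝ) (hx : 0 < x) (hy : 0 ≤ y) (he0 : 0 ≤ e) (he1 : e ≤ 1) :
    y ^ e ≤ x ^ e + e * (x ^ e / x) * (y - x) := by
  have hs : (-1 : ℝ) ≤ y / x - 1 := by
    have : 0 ≤ y / x := div_nonneg hy hx.le
    linarith
  have h1 : (1 + (y / x - 1)) ^ e ≤ 1 + e * (y / x - 1) :=
    rpow_one_add_le_one_add_mul_self hs he0 he1
  have h2 : (1 : ℝ) + (y / x - 1) = y / x := by ring
  rw [h2, Real.div_rpow hy hx.le] at h1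
  have hxe : 0 < x ^ e := Real.rpow_pos_of_pos hx e
  have h3 := mul_le_mul_of_nonneg_left h1 hxe.le
  have h4 : x ^ e * (y ^ e / x ^ e) = y ^ e := by field_simp
  have h5 : x ^ e * (1 + e * (y / x - 1)) = x ^ e + e * (x ^ e / x) * (y - x) := by
    field_simp
  rw [h4, h5] at h3
  exact h3

lemma tangent_upper_strict (x y e : ℝ) (hx : 0 < x) (hy : 0 ≤ y) (hxy : x ≠ y)
    (he0 : 0 < e) (he1 : e < 1) :
    y ^ e < x ^ e + e * (x ^ e / x) * (y - x) := by
  have hs : (-1 : ℝ) ≤ y / x - 1 := by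
    have : 0 ≤ y / x := div_nonneg hy hx.le
    linarith
  have hs' : y / x - 1 ≠ 0 := by
    intro hcon
    apply hxy
    have : y / x = 1 := by linarith [hcon]
    field_simp at this
    linarith
  have h1 : (1 + (y / x - 1)) ^ e < 1 + e * (y / x - 1) :=
    rpow_one_add_lt_one_add_mul_self hs hs' he0 he1
  have h2 : (1 : ℝ) + (y / x - 1) = y / x := by ring
  rw [h2, Real.div_rpow hy hx.le] at h1
  have hxe : 0 < x ^ e := Real.rpow_pos_of_pos hx e
  have h3 := (mul_lt_mul_iff_right₀ hxe).mpr h1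
  have h4 : x ^ e * (y ^ e / x ^ e) = y ^ e := by field_simp
  have h5 : x ^ e * (1 + e * (y / x - 1)) = x ^ e + e * (x ^ e / x) * (y - x) := by
    field_simp
  rw [h4, h5] at h3
  exact h3

lemma final_ineq (C n h1 h2 r1 r2 : ℝ) (hC : 0 < C) (hn : 0 ≤ n)
    (hh1 : 0 < h1) (hh2 : 0 < h2) (hr1 : 1 < r1) (hr2 : 1 < r2)
    (hr : r1 ≤ r2) (hhle : h2 ≤ h1) (hst : r1 < r2 ∨ h2 < h1) :
    r2 / (C * (Real.exp (-(h2 * n)) / h2) * (r2 - 1))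
      < r1 / (C * (Real.exp (-(h1 * n)) / h1) * (r1 - 1)) := by
  set E1 := Real.exp (-(h1 * n)) with hE1
  set E2 := Real.exp (-(h2 * n)) with hE2
  have hE1p : 0 < E1 := Real.exp_pos _
  have hE2p : 0 < E2 := Real.exp_pos _
  have hE12 : E1 ≤ E2 := by
    apply Real.exp_le_exp.mpr
    nlinarith [mul_le_mul_of_nonneg_right hhle hn]
  have key : r2 * (r1 - 1) * (E1 * h2) < r1 * (r2 - 1) * (E2 * h1) := by
    have f1 : r2 * (r1 - 1) ≤ r1 * (r2 - 1) := by nlinarith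
    have f2 : E1 * h2 ≤ E2 * h1 := mul_le_mul hE12 hhle hh2.le hE2p.le
    have p1 : 0 < r2 * (r1 - 1) := by nlinarith
    have p2 : 0 < E1 * h2 := by positivity
    rcases hst with hst | hst
    · have f1' : r2 * (r1 - 1) < r1 * (r2 - 1) := by nlinarith
      nlinarith
    · have f2' : E1 * h2 < E2 * h1 := by nlinarith
      nlinarith
  have d1 : 0 < C * (E1 / h1) * (r1 - 1) :=
    mul_pos (mul_pos hC (div_pos hE1p hh1)) (by linarith)
  have d2 : 0 < C * (E2 / h2) * (r2 - 1) :=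
    mul_pos (mul_pos hC (div_pos hE2p hh2)) (by linarith)
  have d1' : 0 < C * E1 * (r1 - 1) := mul_pos (mul_pos hC hE1p) (by linarith)
  have d2' : 0 < C * E2 * (r2 - 1) := mul_pos (mul_pos hC hE2p) (by linarith)
  have lhs_eq : r2 / (C * (E2 / h2) * (r2 - 1)) = r2 * h2 / (C * E2 * (r2 - 1)) := by
    rw [div_eq_div_iff d2.ne' d2'.ne']
    field_simp
  have rhs_eq : r1 / (C * (E1 / h1) * (r1 - 1)) = r1 * h1 / (C * E1 * (r1 - 1)) := by
    rw [div_eq_div_iff d1.ne' d1'.ne']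
    field_simp
  rw [lhs_eq, rhs_eq, div_lt_div_iff₀ d2' d1']
  nlinarith [key]


set_option maxHeartbeats 2000000 in
/-- For `1/r0 ≤ θ ≤ 1` and `λX > 0`, the investment threshold
`q⋆(m) = r0(m)/((κ1-κ0) A(m) (r0(m)-1))` is not monotone in the demand jump size
`mX = m`: it decreases on negative jump sizes and increases on positive ones. -/
theorem threshold_nonmonotone_in_mX (θ ρ μX σX lamX μI σI lamI mI n κ0 κ1 : ℝ)
    (hθ : 0 < θ) (hθ1 : θ ≤ 1) (hσX : 0 < σX) (hlamX : 0 < lamX)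
    (hσI : 0 < σI) (hlamI : 0 ≤ lamI) (hmI : -1 < mI)
    (hn : 0 ≤ n) (hκ0 : 0 < κ0) (hκ : κ0 < κ1)
    (hρ : μI < ρ)
    (h : ℝ → ℝ)
    (hh : ∀ m : ℝ, h m = ρ - (μX + (θ - 1) * σX ^ 2 / 2 - lamX * m) * θ
      - lamX * ((1 + m) ^ θ - 1))
    (A : ℝ → ℝ)
    (hA : ∀ m : ℝ, A m = Real.exp (-(h m * n)) / h m)
    (jm : ℝ → ℝ → ℝ)
    (hjm : ∀ m r : ℝ, jm m r = ((θ ^ 2 * σX ^ 2 + σI ^ 2) / 2) * r ^ 2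
      + ((μX - σX ^ 2 / 2 - lamX * m) * θ - (μI + σI ^ 2 / 2 - lamI * mI)) * r
      + ((μI - lamI * mI) - (lamX + lamI) - ρ)
      + lamX * (1 + m) ^ (θ * r) + lamI * (1 + mI) ^ (1 - r))
    (mX' mX'' : ℝ) (hmX' : -1 < mX') (hm : mX' < mX'')
    (hhpos' : 0 < h mX') (hhpos'' : 0 < h mX'')
    (r0 : ℝ → ℝ)
    (hr0' : 0 < r0 mX' ∧ jm mX' (r0 mX') = 0)
    (hr0'' : 0 < r0 mX'' ∧ jm mX'' (r0 mX'') = 0)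
    (hθr : 1 ≤ θ * r0 mX') :
    1 < r0 mX' ∧ 1 < r0 mX''
    ∧ (mX'' ≤ 0 →
        r0 mX'' / ((κ1 - κ0) * A mX'' * (r0 mX'' - 1))
          < r0 mX' / ((κ1 - κ0) * A mX' * (r0 mX' - 1)))
    ∧ (0 ≤ mX' →
        r0 mX' / ((κ1 - κ0) * A mX' * (r0 mX' - 1))
          < r0 mX'' / ((κ1 - κ0) * A mX'' * (r0 mX'' - 1))) := by
  have hmX'' : -1 < mX'' := lt_trans hmX' hm
  have h1m' : (0:ℝ) < 1 + mX' := by linarith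
  have h1m'' : (0:ℝ) < 1 + mX'' := by linarith
  have h1mI : (0:ℝ) < 1 + mI := by linarith
  have hC : 0 < κ1 - κ0 := by linarith
  -- convexity of jm m in r
  have hconv : ∀ m : ℝ, -1 < m → ConvexOn ℝ Set.univ (jm m) := by
    intro m hm1
    have h1m : (0:ℝ) < 1 + m := by linarith
    have heq : jm m = fun r : ℝ =>
        ((θ ^ 2 * σX ^ 2 + σI ^ 2) / 2) * r ^ 2
        + ((μX - σX ^ 2 / 2 - lamX * m) * θ - (μI + σI ^ 2 / 2 - lamI * mI)) * r
        + ((μI - lamI * mI) - (lamX + lamI) - ρ)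
        + lamX * Real.exp ((Real.log (1 + m) * θ) * r + 0)
        + lamI * Real.exp ((-Real.log (1 + mI)) * r + Real.log (1 + mI)) := by
      funext r
      rw [hjm, Real.rpow_def_of_pos h1m, Real.rpow_def_of_pos h1mI]
      ring_nf
    rw [heq]
    exact gen_convex _ _ _ _ _ _ _ _ _ (by positivity) hlamX.le hlamI
  -- values at 0 and 1
  have hj0 : ∀ m : ℝ, jm m 0 = μI - ρ := by
    intro m
    have e1 : θ * (0:ℝ) = 0 := mul_zero θ
    have e2 : (1:ℝ) - 0 = 1 := sub_zero 1
    rw [hjm, e1, e2, Real.rpow_zero, Real.rpow_one]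
    ring
  have hj1 : ∀ m : ℝ, jm m 1 = -(h m) := by
    intro m
    have e1 : θ * (1:ℝ) = θ := mul_one θ
    have e2 : (1:ℝ) - 1 = 0 := sub_self 1
    rw [hjm, e1, e2, Real.rpow_zero, hh]
    ring
  -- any positive root is > 1
  have one_lt_root : ∀ m : ℝ, -1 < m → 0 < h m → ∀ r : ℝ, 0 < r → jm m r = 0 → 1 < r := by
    intro m hm1 hhm r hr hjr
    by_contra hle
    push_neg at hle
    rcases eq_or_lt_of_le hle with heq | hlt
    · rw [heq] at hjr
      rw [hj1 m] at hjr
      linarith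
    · have := convex_neg_mid (jm m) (hconv m hm1) hr hlt
        (by rw [hj0 m]; linarith) (by rw [hj1 m]; linarith)
      linarith [this, hjr.ge, hjr.le]
  have hr1' : 1 < r0 mX' := one_lt_root mX' hmX' hhpos' _ hr0'.1 hr0'.2
  have hr1'' : 1 < r0 mX'' := one_lt_root mX'' hmX'' hhpos'' _ hr0''.1 hr0''.2
  set r' := r0 mX' with hr'def
  set r'' := r0 mX'' with hr''def
  have hepos : (0:ℝ) < θ * r' := by nlinarith
  -- difference formulas
  have hdiffj : jm mX'' r' - jm mX' r' =
      lamX * (((1 + mX'') ^ (θ * r') - (1 + mX') ^ (θ * r')) - θ * r' * (mX'' - mX')) := by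
    rw [hjm mX'' r', hjm mX' r']
    ring
  have hdiffh : h mX'' - h mX' =
      lamX * (θ * (mX'' - mX') - ((1 + mX'') ^ θ - (1 + mX') ^ θ)) := by
    rw [hh mX'', hh mX']
    ring
  refine ⟨hr1', hr1'', ?_, ?_⟩
  · -- case (a): mX'' ≤ 0
    intro hma
    have hy1 : (1 + mX'') ≤ 1 := by linarith
    -- ψ-comparison : jm mX'' r' ≤ 0, strict if θ*r' > 1
    have hfrac : (1 + mX'') ^ (θ * r') / (1 + mX'') ≤ 1 := by
      rw [div_le_one h1m'']
      calc (1 + mX'') ^ (θ * r') ≤ (1 + mX'') ^ (1:ℝ) :=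
            Real.rpow_le_rpow_of_exponent_ge h1m'' hy1 hθr
        _ = 1 + mX'' := Real.rpow_one _
    have hpsi : ((1 + mX'') ^ (θ * r') - (1 + mX') ^ (θ * r')) - θ * r' * (mX'' - mX') ≤ 0 := by
      have htan := tangent_lower (1 + mX'') (1 + mX') (θ * r') h1m'' h1m'.le hθr
      have hmul := mul_le_mul_of_nonneg_left hfrac
        (mul_nonneg hepos.le (by linarith : (0:ℝ) ≤ mX'' - mX'))
      linarith [htan, hmul]
    have hjle : jm mX'' r' ≤ 0 := by
      have h1 := mul_le_mul_of_nonneg_left hpsi hlamX.le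
      simp only [mul_zero] at h1
      linarith [hdiffj, hr0'.2, h1]
    -- r' ≤ r''
    have hrle : r' ≤ r'' := by
      by_contra hlt
      push_neg at hlt
      have := convex_neg_mid (jm mX'') (hconv mX'' hmX'') hr1'' hlt
        (by rw [hj1 mX'']; linarith) hjle
      linarith [hr0''.2.ge, hr0''.2.le, this]
    -- h mX'' ≤ h mX'
    have hfrach : 1 ≤ (1 + mX'') ^ θ / (1 + mX'') := by
      rw [le_div_iff₀ h1m'']
      calc (1:ℝ) * (1 + mX'') = (1 + mX'') ^ (1:ℝ) := by rw [Real.rpow_one]; ring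
        _ ≤ (1 + mX'') ^ θ := Real.rpow_le_rpow_of_exponent_ge h1m'' hy1 hθ1
    have hgcomp : θ * (mX'' - mX') - ((1 + mX'') ^ θ - (1 + mX') ^ θ) ≤ 0 := by
      have htan := tangent_upper (1 + mX'') (1 + mX') θ h1m'' h1m'.le hθ.le hθ1
      have hmul := mul_le_mul_of_nonneg_right hfrach
        (mul_nonneg hθ.le (by linarith : (0:ℝ) ≤ mX'' - mX'))
      linarith [htan, hmul]
    have hhle : h mX'' ≤ h mX' := by
      have := mul_le_mul_of_nonneg_left hgcomp hlamX.le
      simp only [mul_zero] at this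
      linarith [hdiffh, this]
    -- strictness
    have hst : r' < r'' ∨ h mX'' < h mX' := by
      rcases eq_or_lt_of_le hθ1 with hθeq | hθlt
      · -- θ = 1 : strict in r
        left
        have he1 : 1 < θ * r' := by rw [hθeq]; simpa using hr1'
        have hpsi' : ((1 + mX'') ^ (θ * r') - (1 + mX') ^ (θ * r'))
            - θ * r' * (mX'' - mX') < 0 := by
          have htan := tangent_lower_strict (1 + mX'') (1 + mX') (θ * r') h1m'' h1m'.le
            (by intro hcon; linarith [hcon, hm]) he1
          have hmul := mul_le_mul_of_nonneg_left hfrac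
            (mul_nonneg hepos.le (by linarith : (0:ℝ) ≤ mX'' - mX'))
          linarith [htan, hmul]
        have hjlt : jm mX'' r' < 0 := by
          have h1 := mul_lt_mul_of_pos_left hpsi' hlamX
          simp only [mul_zero] at h1
          linarith [hdiffj, hr0'.2, h1]
        rcases lt_or_eq_of_le hrle with hlt | heq
        · exact hlt
        · exfalso
          have : jm mX'' r'' < 0 := heq ▸ hjlt
          linarith [hr0''.2.ge, this]
      · -- θ < 1 : strict in h
        right
        have hgcomp' : θ * (mX'' - mX') - ((1 + mX'') ^ θ - (1 + mX') ^ θ) < 0 := by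
          have htan := tangent_upper_strict (1 + mX'') (1 + mX') θ h1m'' h1m'.le
            (by intro hcon; linarith [hcon, hm]) hθ hθlt
          have hmul := mul_le_mul_of_nonneg_right hfrach
            (mul_nonneg hθ.le (by linarith : (0:ℝ) ≤ mX'' - mX'))
          linarith [htan, hmul]
        have h1 := mul_lt_mul_of_pos_left hgcomp' hlamX
        simp only [mul_zero] at h1
        linarith [hdiffh, h1]
    rw [hA mX', hA mX'']
    exact final_ineq (κ1 - κ0) n (h mX') (h mX'') r' r'' hC hn hhpos' hhpos''
      hr1' hr1'' hrle hhle hst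
  · -- case (b): 0 ≤ mX'
    intro hmb
    have hx1 : (1:ℝ) ≤ 1 + mX' := by linarith
    have hfrac : 1 ≤ (1 + mX') ^ (θ * r') / (1 + mX') := by
      rw [le_div_iff₀ h1m']
      calc (1:ℝ) * (1 + mX') = (1 + mX') ^ (1:ℝ) := by rw [Real.rpow_one]; ring
        _ ≤ (1 + mX') ^ (θ * r') := Real.rpow_le_rpow_of_exponent_le hx1 hθr
    have hpsi : 0 ≤ ((1 + mX'') ^ (θ * r') - (1 + mX') ^ (θ * r')) - θ * r' * (mX'' - mX') := by
      have htan := tangent_lower (1 + mX') (1 + mX'') (θ * r') h1m' h1m''.le hθr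
      have hmul := mul_le_mul_of_nonneg_right hfrac
        (mul_nonneg hepos.le (by linarith : (0:ℝ) ≤ mX'' - mX'))
      linarith [htan, hmul]
    have hjge : 0 ≤ jm mX'' r' := by
      have h1 := mul_le_mul_of_nonneg_left hpsi hlamX.le
      simp only [mul_zero] at h1
      linarith [hdiffj, hr0'.2, h1]
    have hrle : r'' ≤ r' := by
      by_contra hlt
      push_neg at hlt
      have := convex_neg_mid (jm mX'') (hconv mX'' hmX'') hr1' hlt
        (by rw [hj1 mX'']; linarith) hr0''.2.le
      linarith
    have hfrach : (1 + mX') ^ θ / (1 + mX') ≤ 1 := by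
      rw [div_le_one h1m']
      calc (1 + mX') ^ θ ≤ (1 + mX') ^ (1:ℝ) := Real.rpow_le_rpow_of_exponent_le hx1 hθ1
        _ = 1 + mX' := Real.rpow_one _
    have hgcomp : 0 ≤ θ * (mX'' - mX') - ((1 + mX'') ^ θ - (1 + mX') ^ θ) := by
      have htan := tangent_upper (1 + mX') (1 + mX'') θ h1m' h1m''.le hθ.le hθ1
      have hmul := mul_le_mul_of_nonneg_left hfrach
        (mul_nonneg hθ.le (by linarith : (0:ℝ) ≤ mX'' - mX'))
      linarith [htan, hmul]
    have hhle : h mX' ≤ h mX'' := by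
      have h1 := mul_le_mul_of_nonneg_left hgcomp hlamX.le
      simp only [mul_zero] at h1
      linarith [hdiffh, h1]
    have hst : r'' < r' ∨ h mX' < h mX'' := by
      rcases eq_or_lt_of_le hθ1 with hθeq | hθlt
      · left
        have he1 : 1 < θ * r' := by rw [hθeq]; simpa using hr1'
        have hpsi' : 0 < ((1 + mX'') ^ (θ * r') - (1 + mX') ^ (θ * r'))
            - θ * r' * (mX'' - mX') := by
          have htan := tangent_lower_strict (1 + mX') (1 + mX'') (θ * r') h1m' h1m''.le
            (by intro hcon; linarith [hcon, hm]) he1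
          have hmul := mul_le_mul_of_nonneg_right hfrac
            (mul_nonneg hepos.le (by linarith : (0:ℝ) ≤ mX'' - mX'))
          linarith [htan, hmul]
        have hjlt : 0 < jm mX'' r' := by
          have h1 := mul_lt_mul_of_pos_left hpsi' hlamX
          simp only [mul_zero] at h1
          linarith [hdiffj, hr0'.2, h1]
        rcases lt_or_eq_of_le hrle with hlt | heq
        · exact hlt
        · exfalso
          have : jm mX'' r' = 0 := heq ▸ hr0''.2
          linarith [this, hjlt]
      · right
        have hgcomp' : 0 < θ * (mX'' - mX') - ((1 + mX'') ^ θ - (1 + mX') ^ θ) := by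
          have htan := tangent_upper_strict (1 + mX') (1 + mX'') θ h1m' h1m''.le
            (by intro hcon; linarith [hcon, hm]) hθ hθlt
          have hmul := mul_le_mul_of_nonneg_left hfrach
            (mul_nonneg hθ.le (by linarith : (0:ℝ) ≤ mX'' - mX'))
          linarith [htan, hmul]
        have h1 := mul_lt_mul_of_pos_left hgcomp' hlamX
        simp only [mul_zero] at h1
        linarith [hdiffh, h1]
    rw [hA mX', hA mX'']
    exact final_ineq (κ1 - κ0) n (h mX'') (h mX') r'' r' hC hn hhpos'' hhpos'
      hr1'' hr1' hrle hhle hst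
end
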